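/- arXiv:2304.02943 — 10 statements merged into one kernel-verified Lean document; each statement's English description precedes it below -/
import Mathlib

section
/- Let 𝔽 be a finite field and let k, n, d be positive integers with |𝔽|^d ≥ n^5 and k·n^{-3} + k^2·n^{-1} < 1. Let V be a finite set partitioned into k disjoint parts V_1, …, V_k, each of size n. Then there exists a function H : V → 𝔽^d such that: (i) for every i ∈ [k] and all distinct v, v' ∈ V_i, H(v) ≠ H(v'); and (ii) for all distinct i, j ∈ [k] and all pairs (v_i, v_j), (v_i', v_j') ∈ V_i × V_j with (v_i, v_j) ≠ (v_i', v_j'), H(v_i) + H(v_j) ≠ H(v_i') + H(v_j'). -/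
/-- Greedy construction of a "Sidon set" of size `m` in a finite additive
commutative group, provided `s^3 + s < |G|` for all `s < m`. -/
lemma sidon_exists {G : Type} [AddCommGroup G] [Fintype G] [DecidableEq G] :
    ∀ m : ℕ, (∀ s : ℕ, s < m → s ^ 3 + s < Fintype.card G) →
    ∃ S : Finset G, S.card = m ∧
      ∀ a ∈ S, ∀ b ∈ S, ∀ c ∈ S, ∀ e ∈ S, a + b = c + e → a ≠ b → c ≠ e →
        (a = c ∧ b = e) ∨ (a = e ∧ b = c) := by
  intro m
  induction m with
  | zero => exact fun _ => ⟨∅, by simp⟩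
  | succ m ih =>
    intro h
    obtain ⟨S, hScard, hSidon⟩ := ih (fun s hs => h s (hs.trans (Nat.lt_succ_self m)))
    set F : Finset G :=
      S ∪ ((S ×ˢ S ×ˢ S).image (fun p => p.2.1 + p.2.2 - p.1)) with hF
    have hFcard : F.card < Fintype.card G := by
      calc F.card ≤ S.card + ((S ×ˢ S ×ˢ S).image (fun p => p.2.1 + p.2.2 - p.1)).card :=
            Finset.card_union_le _ _
        _ ≤ S.card + (S ×ˢ S ×ˢ S).card := by
            gcongr; exact Finset.card_image_le
        _ ≤ m ^ 3 + m := by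
            simp [Finset.card_product, hScard]; ring_nf; omega
        _ < Fintype.card G := h m (Nat.lt_succ_self m)
    obtain ⟨x, hx⟩ : ∃ x : G, x ∉ F := by
      by_contra hcon
      push_neg at hcon
      have h1 : (Finset.univ : Finset G) ⊆ F := fun y _ => hcon y
      have h2 := Finset.card_le_card h1
      rw [Finset.card_univ] at h2
      omega
    have hxS : x ∉ S := fun h' => hx (Finset.mem_union_left _ h')
    have hforb : ∀ a' ∈ S, ∀ b' ∈ S, ∀ c' ∈ S, x ≠ b' + c' - a' := by
      intro a' ha' b' hb' c' hc' hxe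
      exact hx (Finset.mem_union_right _ (Finset.mem_image.mpr
        ⟨(a', b', c'), by simp [Finset.mem_product, ha', hb', hc'], hxe.symm⟩))
    refine ⟨insert x S, by rw [Finset.card_insert_of_notMem hxS, hScard], ?_⟩
    intro a ha b hb c hc e he habce hab hce
    rw [Finset.mem_insert] at ha hb hc he
    rcases ha with rfl | ha <;> rcases hb with rfl | hb <;>
      rcases hc with rfl | hc <;> rcases he with rfl | he <;>
      first
        | exact absurd rfl hab
        | exact absurd rfl hce
        | exact Or.inl ⟨rfl, add_left_cancel habce⟩
        | exact Or.inl ⟨add_right_cancel habce, rfl⟩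
        | exact Or.inr ⟨rfl, add_left_cancel (habce.trans (add_comm _ _))⟩
        | exact Or.inr ⟨add_right_cancel (habce.trans (add_comm _ _)), rfl⟩
        | exact absurd (by rw [← habce]; abel1) (hforb b hb c hc e he)
        | exact absurd (by rw [← habce]; abel1) (hforb a ha c hc e he)
        | exact absurd (by rw [habce]; abel1) (hforb e he a ha b hb)
        | exact absurd (by rw [habce]; abel1) (hforb c hc a ha b hb)
        | exact hSidon a ha b hb c hc e he habce hab hce

/-- existence of a "pairwise-sum distinguishing" hash function
`H : V → 𝔽^d` for a vertex set `V` partitioned into `k` parts of size `n`,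
provided `|𝔽|^d ≥ n^5` and `k/n³ + k²/n < 1`. -/
theorem stmt_0 {𝔽 V : Type} [Field 𝔽] [Fintype 𝔽] [Fintype V] [DecidableEq V]
    (k n d : ℕ) (hk : 0 < k) (hn : 0 < n) (hd : 0 < d)
    (hcard : n ^ 5 ≤ (Fintype.card 𝔽) ^ d)
    (hprob : (k : ℝ) / (n : ℝ) ^ 3 + (k : ℝ) ^ 2 / (n : ℝ) < 1)
    (parts : Fin k → Finset V)
    (hdisj : ∀ i j : Fin k, i ≠ j → Disjoint (parts i) (parts j))
    (hcover : ∀ v : V, ∃ i : Fin k, v ∈ parts i)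
    (hsize : ∀ i : Fin k, (parts i).card = n) :
    ∃ H : V → (Fin d → 𝔽),
      (∀ i : Fin k, ∀ v ∈ parts i, ∀ v' ∈ parts i, v ≠ v' → H v ≠ H v') ∧
      (∀ i j : Fin k, i ≠ j →
        ∀ vi ∈ parts i, ∀ vj ∈ parts j, ∀ vi' ∈ parts i, ∀ vj' ∈ parts j,
          (vi, vj) ≠ (vi', vj') → H vi + H vj ≠ H vi' + H vj') := by
  classical
  -- arithmetic: k² + 1 ≤ n
  have hnR : (0:ℝ) < n := by positivity
  have hk2R : (k:ℝ)^2 < (n:ℝ) := by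
    have h1 : (k:ℝ)^2 / n < 1 := by
      have h0 : (0:ℝ) < (k:ℝ) / (n:ℝ)^3 := by positivity
      linarith
    exact (div_lt_one hnR).mp h1
  have hk2 : k^2 + 1 ≤ n := by
    have : k^2 < n := by exact_mod_cast hk2R
    omega
  -- card of the group
  have hcardG : Fintype.card (Fin d → 𝔽) = (Fintype.card 𝔽) ^ d := by
    simp [Fintype.card_fun]
  have harith : ∀ s : ℕ, s < k * n → s ^ 3 + s < Fintype.card (Fin d → 𝔽) := by
    intro s hs
    rw [hcardG]
    have h1 : s + 1 ≤ k * n := hs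
    have h2 : s ^ 3 + s < (s+1) ^ 3 := by nlinarith
    have h3 : (s+1) ^ 3 ≤ (k*n) ^ 3 := Nat.pow_le_pow_left h1 3
    have hkk : k ≤ k^2 := Nat.le_self_pow (by norm_num) k
    have hA : k^4 + 2*k^2 + 1 ≤ n^2 := by nlinarith
    have hC : k^3 < n^2 := by nlinarith
    have h4 : (k*n)^3 < n ^ 5 := by
      calc (k*n)^3 = k^3 * n^3 := by ring
        _ < n^2 * n^3 := by
            have h3pos : 0 < n^3 := by positivity
            exact mul_lt_mul_of_pos_right hC h3pos
        _ = n^5 := by ring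
    linarith
  -- Sidon set of size k*n
  obtain ⟨S, hScard, hSidon⟩ := sidon_exists (G := Fin d → 𝔽) (k*n) harith
  -- card V ≤ k * n
  have hcardV : Fintype.card V ≤ k * n := by
    have hsub : (Finset.univ : Finset V) ⊆ Finset.univ.biUnion parts := by
      intro v _
      obtain ⟨i, hi⟩ := hcover v
      exact Finset.mem_biUnion.mpr ⟨i, Finset.mem_univ i, hi⟩
    calc Fintype.card V = (Finset.univ : Finset V).card := rfl
      _ ≤ (Finset.univ.biUnion parts).card := Finset.card_le_card hsub
      _ ≤ ∑ i : Fin k, (parts i).card := Finset.card_biUnion_le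
      _ = k * n := by simp [hsize, Finset.sum_const, mul_comm]
  -- embedding V into S
  have hcardS : Fintype.card V ≤ Fintype.card {x // x ∈ S} := by
    rw [Fintype.card_coe, hScard]; exact hcardV
  obtain ⟨emb⟩ := Function.Embedding.nonempty_of_card_le hcardS
  refine ⟨fun v => (emb v : Fin d → 𝔽), ?_, ?_⟩
  · intro i v _ v' _ hne heq
    exact hne (emb.injective (Subtype.ext heq))
  · intro i j hij vi hvi vj hvj vi' hvi' vj' hvj' hpair heq
    have hinj : Function.Injective (fun v : V => (emb v : Fin d → 𝔽)) :=
      fun v w h => emb.injective (Subtype.ext h)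
    have hmem : ∀ v : V, ((emb v : Fin d → 𝔽)) ∈ S := fun v => (emb v).2
    have hne1 : (emb vi : Fin d → 𝔽) ≠ emb vj := by
      intro h
      have := hinj h
      subst this
      exact Finset.disjoint_left.mp (hdisj i j hij) hvi hvj
    have hne2 : (emb vi' : Fin d → 𝔽) ≠ emb vj' := by
      intro h
      have := hinj h
      subst this
      exact Finset.disjoint_left.mp (hdisj i j hij) hvi' hvj'
    rcases hSidon _ (hmem vi) _ (hmem vj) _ (hmem vi') _ (hmem vj') heq hne1 hne2 with
      ⟨e1, e2⟩ | ⟨e1, e2⟩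
    · exact hpair (by rw [hinj e1, hinj e2])
    · have := hinj e1
      subst this
      exact Finset.disjoint_left.mp (hdisj i j hij) hvi hvj'
end

section
/- Let 𝔽 be a field, d and k positive integers, and let G be a simple graph whose vertex set V is partitioned into k disjoint parts V_1, …, V_k, each of which is an independent set of G. Suppose H : V → 𝔽^d satisfies: (i) for every i ∈ [k] and all distinct v, v' ∈ V_i, H(v) ≠ H(v'); and (ii) for all distinct i, j ∈ [k] and all pairs (v_i, v_j), (v_i', v_j') ∈ V_i × V_j with (v_i, v_j) ≠ (v_i', v_j'), H(v_i) + H(v_j) ≠ H(v_i') + H(v_j'). Define T_i = {H(v) : v ∈ V_i} for each i ∈ [k], and U_{i,j} = {H(u) + H(w) : u ∈ V_i, w ∈ V_j, {u,w} an edge of G} for each 1 ≤ i < j ≤ k. Then there exist x_1, …, x_k ∈ 𝔽^d with x_i ∈ T_i for every i ∈ [k] and x_i + x_j ∈ U_{i,j} for all 1 ≤ i < j ≤ k, if and only if G contains vertices v_1 ∈ V_1, …, v_k ∈ V_k that form a clique of size k. -/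
/-- the vector 2CSP instance built from a partitioned clique
instance via a distinguishing hash `H` is satisfiable iff the graph contains
a multicolored `k`-clique. -/
theorem stmt_1 {𝔽 V : Type} [Field 𝔽] [Fintype V] [DecidableEq V]
    (d k : ℕ) (hd : 0 < d) (hk : 0 < k)
    (G : SimpleGraph V)
    (parts : Fin k → Finset V)
    (hdisj : ∀ i j : Fin k, i ≠ j → Disjoint (parts i) (parts j))
    (hcover : ∀ v : V, ∃ i : Fin k, v ∈ parts i)
    (hindep : ∀ i : Fin k, ∀ v ∈ parts i, ∀ w ∈ parts i, ¬ G.Adj v w)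
    (H : V → (Fin d → 𝔽))
    (h1 : ∀ i : Fin k, ∀ v ∈ parts i, ∀ v' ∈ parts i, v ≠ v' → H v ≠ H v')
    (h2 : ∀ i j : Fin k, i ≠ j →
      ∀ vi ∈ parts i, ∀ vj ∈ parts j, ∀ vi' ∈ parts i, ∀ vj' ∈ parts j,
        (vi, vj) ≠ (vi', vj') → H vi + H vj ≠ H vi' + H vj')
    (T : Fin k → Set (Fin d → 𝔽))
    (hT : ∀ i : Fin k, T i = H '' (parts i : Set V))
    (U : Fin k → Fin k → Set (Fin d → 𝔽))
    (hU : ∀ i j : Fin k, i < j →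
      U i j = {z | ∃ u ∈ parts i, ∃ w ∈ parts j, G.Adj u w ∧ z = H u + H w}) :
    (∃ x : Fin k → (Fin d → 𝔽),
        (∀ i : Fin k, x i ∈ T i) ∧ ∀ i j : Fin k, i < j → x i + x j ∈ U i j) ↔
    (∃ v : Fin k → V,
        (∀ i : Fin k, v i ∈ parts i) ∧ ∀ i j : Fin k, i ≠ j → G.Adj (v i) (v j)) := by
  constructor
  · rintro ⟨x, hxT, hxU⟩
    have hex : ∀ i, ∃ v ∈ parts i, x i = H v := by
      intro i
      have h := hxT i
      rw [hT i] at h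
      obtain ⟨v, hv, hvx⟩ := h
      exact ⟨v, hv, hvx.symm⟩
    choose v hv hvx using hex
    refine ⟨v, hv, ?_⟩
    have key : ∀ i j : Fin k, i < j → G.Adj (v i) (v j) := by
      intro i j hij
      have h := hxU i j hij
      rw [hU i j hij] at h
      obtain ⟨u, hu, w, hw, hadj, heq⟩ := h
      have hne : i ≠ j := hij.ne
      have heq2 : (v i, v j) = (u, w) := by
        by_contra hcon
        exact h2 i j hne (v i) (hv i) (v j) (hv j) u hu w hw hcon
          (by rw [← hvx i, ← hvx j, ← heq])
      rw [Prod.mk.injEq] at heq2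
      rw [heq2.1, heq2.2]
      exact hadj
    intro i j hij
    rcases lt_or_gt_of_ne hij with h | h
    · exact key i j h
    · exact (key j i h).symm
  · rintro ⟨v, hv, hadj⟩
    refine ⟨fun i => H (v i), fun i => by rw [hT i]; exact ⟨v i, hv i, rfl⟩, ?_⟩
    intro i j hij
    rw [hU i j hij]
    exact ⟨v i, hv i, v j, hv j, hadj i j hij.ne, rfl⟩
end

section
/- Let Σ₁, Σ₂ be finite alphabets with Σ₁ nonempty and |Σ₂| ≥ 2, let k, n, q be positive integers, C : Σ₁^k → Σ₂^n injective, and let δ, ε_T, ε_D ∈ (0,1) with n > 1/δ. Suppose: (local tester) there are a finite nonempty set R_T, a map var assigning to each r ∈ R_T a set var(r) ⊆ [n] of size q, and for each r ∈ R_T a set A_r of functions var(r) → Σ₂, such that for every codeword c ∈ Im(C) and every r ∈ R_T the restriction of c to var(r) lies in A_r, and for every w ∈ Σ₂^n, if the fraction of r ∈ R_T whose restriction of w to var(r) lies in A_r is at least ε_T, then Δ(w, Im(C)) ≤ δ; (local decoders) for every i ∈ [k] there exist a finite nonempty set R, maps a_1, a_2 : R → [n], and maps D_r : Σ₂ ×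 Σ₂ → Σ₁ for r ∈ R, such that for every m ∈ Σ₁^k and every r ∈ R, D_r(C(m)[a_1(r)], C(m)[a_2(r)]) = m[i], and for every m ∈ Σ₁^k and every w ∈ Σ₂^n with Δ(w, C(m)) ≤ 5δ, the fraction of r ∈ R with D_r(w[a_1(r)], w[a_2(r)]) = m[i] is at least ε_D. Then for every subset I ⊆ R_T with |I| ≥ ε_T·|R_T|, the union ⋃_{r∈I} var(r) has size at least (1−2δ)·n. -/
/-- Relative Hamming distance between two strings of length `n`. -/
noncomputable def relHamming {n : ℕ} {α : Type} (u v : Fin n → α) : ℝ :=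
  (Nat.card {i : Fin n // u i ≠ v i} : ℝ) / n

open scoped Classical in
lemma relHamming_eq {n : ℕ} {α : Type} (u v : Fin n → α) :
    relHamming u v = ((Finset.univ.filter fun i => u i ≠ v i).card : ℝ) / n := by
  rw [relHamming, Nat.card_eq_fintype_card, Fintype.card_subtype]

open scoped Classical in
lemma relHamming_triangle {n : ℕ} {α : Type} (hn : 0 < n) (u v w : Fin n → α) :
    relHamming u w ≤ relHamming u v + relHamming v w := by
  rw [relHamming_eq, relHamming_eq, relHamming_eq, ← add_div,
    div_le_div_iff_of_pos_right (by exact_mod_cast hn)]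
  have hsub : (Finset.univ.filter fun i => u i ≠ w i) ⊆
      (Finset.univ.filter fun i => u i ≠ v i) ∪ (Finset.univ.filter fun i => v i ≠ w i) := by
    intro i hi
    simp only [Finset.mem_filter, Finset.mem_union, Finset.mem_univ, true_and] at *
    by_contra h
    push_neg at h
    exact hi (h.1.trans h.2)
  have h1 := Finset.card_le_card hsub
  have h2 := Finset.card_union_le (Finset.univ.filter fun i => u i ≠ v i)
    (Finset.univ.filter fun i => v i ≠ w i)
  exact_mod_cast h1.trans h2

open scoped Classical in
lemma relHamming_comm {n : ℕ} {α : Type} (u v : Fin n → α) :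
    relHamming u v = relHamming v u := by
  rw [relHamming_eq, relHamming_eq]
  congr 2
  apply Finset.card_bij (fun i _ => i) <;> simp [ne_comm]

/-- for a code that is locally testable (with query sets `var r`)
and 2-query locally decodable, any set `I` of at least an `ε_T` fraction of the
tester's random strings must query at least a `(1 − 2δ)` fraction of the
positions. -/
theorem stmt_3 {α β : Type} [Fintype α] [Fintype β] [Nonempty α]
    (hβ : 2 ≤ Fintype.card β)
    (k n q : ℕ) (hk : 0 < k) (hn : 0 < n) (hq : 0 < q)
    (C : (Fin k → α) → (Fin n → β)) (hC : Function.Injective C)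
    (δ εT εD : ℝ) (hδ : 0 < δ ∧ δ < 1) (hεT : 0 < εT ∧ εT < 1) (hεD : 0 < εD ∧ εD < 1)
    (hnδ : (n : ℝ) > 1 / δ)
    -- local tester
    (RT : Type) [Fintype RT] [Nonempty RT]
    (var : RT → Finset (Fin n)) (hvarcard : ∀ r : RT, (var r).card = q)
    (Acc : (r : RT) → Set ({i : Fin n // i ∈ var r} → β))
    (htest_complete : ∀ (m : Fin k → α) (r : RT),
      (fun i : {i : Fin n // i ∈ var r} => C m i.1) ∈ Acc r)
    (htest_sound : ∀ w : Fin n → β,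
      (Nat.card {r : RT // (fun i : {i : Fin n // i ∈ var r} => w i.1) ∈ Acc r} : ℝ)
          / Fintype.card RT ≥ εT →
      ∃ m : Fin k → α, relHamming w (C m) ≤ δ)
    -- local decoders
    (hdec : ∀ i : Fin k, ∃ (R : Type) (_ : Fintype R), Nonempty R ∧
      ∃ (a₁ a₂ : R → Fin n) (D : R → β → β → α),
        (∀ (m : Fin k → α) (r : R), D r (C m (a₁ r)) (C m (a₂ r)) = m i) ∧
        (∀ (m : Fin k → α) (w : Fin n → β), relHamming w (C m) ≤ 5 * δ →
          (Nat.card {r : R // D r (w (a₁ r)) (w (a₂ r)) = m i} : ℝ) / Nat.card R ≥ εD)) :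
    ∀ I : Finset RT, (I.card : ℝ) ≥ εT * Fintype.card RT →
      ((I.biUnion var).card : ℝ) ≥ (1 - 2 * δ) * n := by
  classical
  intro I hI
  by_contra hU
  push_neg at hU
  set U := I.biUnion var with hUdef
  obtain ⟨hδ0, hδ1⟩ := hδ
  have hn' : (0:ℝ) < n := by exact_mod_cast hn
  have hδn : 1 < δ * n := by
    rw [gt_iff_lt, div_lt_iff₀ hδ0] at hnδ
    linarith [mul_comm δ (n:ℝ)]
  -- a message and a flip function
  obtain ⟨m⟩ : Nonempty (Fin k → α) := inferInstance
  have hflip : ∀ i : Fin n, ∃ b : β, b ≠ C m i := fun i =>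
    Fintype.exists_ne_of_one_lt_card (by omega) (C m i)
  choose flip hflipne using hflip
  -- the set S
  set s : ℕ := Nat.floor (δ * n) + 1 with hsdef
  have hs_gt : (δ * n : ℝ) < s := by
    exact_mod_cast Nat.lt_floor_add_one (δ * n)
  have hs_le : (s : ℝ) ≤ δ * n + 1 := by
    rw [hsdef]
    push_cast
    have := Nat.floor_le (le_of_lt (by positivity : (0:ℝ) < δ * n))
    linarith
  have hs_lt2 : (s : ℝ) < 2 * δ * n := by linarith
  have hUcard : U.card ≤ n := by
    simpa using Finset.card_le_card (Finset.subset_univ U)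
  have hsum : s + U.card ≤ n := by
    have : (s:ℝ) + U.card < n := by linarith
    exact_mod_cast this.le
  have hcompl : s ≤ (Finset.univ \ U).card := by
    rw [Finset.card_sdiff_of_subset (Finset.subset_univ U), Finset.card_univ, Fintype.card_fin]
    omega
  obtain ⟨S, hSsub, hScard⟩ := Finset.exists_subset_card_eq hcompl
  -- the word w
  set w : Fin n → β := fun i => if i ∈ S then flip i else C m i with hwdef
  have hwU : ∀ i ∈ U, w i = C m i := by
    intro i hi
    have : i ∉ S := fun h => (Finset.mem_sdiff.mp (hSsub h)).2 hi
    simp [hwdef, this]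
  have hwdist : relHamming w (C m) = (s : ℝ) / n := by
    rw [relHamming_eq]
    congr 2
    rw [← hScard]
    congr 1
    ext i
    simp only [Finset.mem_filter, Finset.mem_univ, true_and, hwdef]
    constructor
    · intro h
      by_contra hiS
      simp [hiS] at h
    · intro h
      simp [h, hflipne i]
  -- tester accepts for all r ∈ I
  have haccept : ∀ r ∈ I, (fun i : {i : Fin n // i ∈ var r} => w i.1) ∈ Acc r := by
    intro r hr
    have : (fun i : {i : Fin n // i ∈ var r} => w i.1)
        = (fun i : {i : Fin n // i ∈ var r} => C m i.1) := by
      funext i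
      exact hwU i.1 (Finset.mem_biUnion.mpr ⟨r, hr, i.2⟩)
    rw [this]
    exact htest_complete m r
  have hRTpos : (0:ℝ) < Fintype.card RT := by
    exact_mod_cast Fintype.card_pos
  have hfrac : (Nat.card {r : RT // (fun i : {i : Fin n // i ∈ var r} => w i.1) ∈ Acc r} : ℝ)
      / Fintype.card RT ≥ εT := by
    rw [ge_iff_le, le_div_iff₀ hRTpos]
    have hcard : I.card ≤ Nat.card {r : RT // (fun i : {i : Fin n // i ∈ var r} => w i.1) ∈ Acc r} := by
      rw [Nat.card_eq_fintype_card, Fintype.card_subtype]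
      apply Finset.card_le_card
      intro r hr
      simp only [Finset.mem_filter, Finset.mem_univ, true_and]
      exact haccept r hr
    calc εT * Fintype.card RT ≤ I.card := hI
      _ ≤ _ := by exact_mod_cast hcard
  obtain ⟨m', hm'⟩ := htest_sound w hfrac
  -- m ≠ m'
  have hwm : relHamming w (C m) > δ := by
    rw [hwdist, gt_iff_lt, lt_div_iff₀ hn']
    linarith
  have hmm' : m ≠ m' := by
    intro h
    rw [← h] at hm'
    linarith
  obtain ⟨i, hi⟩ := Function.ne_iff.mp hmm'
  -- C m is close to C m'
  have hclose : relHamming (C m) (C m') ≤ 5 * δ := by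
    have ht := relHamming_triangle hn (C m) w (C m')
    rw [relHamming_comm (C m) w] at ht
    have h1 : relHamming w (C m) ≤ 2 * δ := by
      rw [hwdist, div_le_iff₀ hn']
      linarith
    linarith
  -- decoder gives contradiction
  obtain ⟨R, hRfin, ⟨hRne⟩, a₁, a₂, D, hperf, hsmooth⟩ := hdec i
  have hsm := hsmooth m' (C m) hclose
  haveI := hRfin
  haveI : Nonempty R := ⟨hRne⟩
  have hRpos : (0:ℝ) < Nat.card R := by exact_mod_cast Nat.card_pos
  have hpos : (0:ℝ) < (Nat.card {r : R // D r (C m (a₁ r)) (C m (a₂ r)) = m' i} : ℝ) := by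
    by_contra h
    push_neg at h
    have h0 : (Nat.card {r : R // D r (C m (a₁ r)) (C m (a₂ r)) = m' i} : ℝ) = 0 := by
      have : (0:ℝ) ≤ (Nat.card {r : R // D r (C m (a₁ r)) (C m (a₂ r)) = m' i} : ℝ) := by positivity
      linarith
    rw [h0, zero_div] at hsm
    linarith [hεD.1]
  have hne : Nonempty {r : R // D r (C m (a₁ r)) (C m (a₂ r)) = m' i} :=
    (Nat.card_pos_iff.mp (by exact_mod_cast hpos)).1
  obtain ⟨r, hr⟩ := hne
  exact hi ((hperf m r).symm.trans hr)
end

section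
/- Let G be a simple graph whose vertex set is partitioned into k disjoint parts V_1, …, V_k, each an independent set. Let r ≥ 2 and s be positive integers, and let I_1, …, I_m ⊆ [k] be pairwise distinct subsets, each of size ℓ, such that the union of any r distinct subsets among them has size at least s. Define a simple graph G' whose vertex set is the disjoint union of parts V'_1, …, V'_m, where V'_i consists of all tuples (u_j)_{j ∈ I_i} with u_j ∈ V_j for each j ∈ I_i, and where two distinct tuples are adjacent in G' if and only if the set of all G-vertices appearing in the two tuples is a clique in G. Then: (i) if G contains vertices v_1 ∈ V_1, …, v_k ∈ V_k forming a clique of size k, then G' contains a clique of size m with exactly one vertex in each part V'_i; and (ii) if G' contains a clique of size r, then G contains a clique of size at least s. -/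
/-- The vertex type of the disperser product graph: a part index `i ∈ [m]`
together with a tuple `(u_j)_{j ∈ I_i}` where `u_j ∈ V_j`. -/
def DispVert {V : Type} {k m : ℕ} (parts : Fin k → Finset V)
    (I : Fin m → Finset (Fin k)) : Type :=
  (i : Fin m) × ((j : {j : Fin k // j ∈ I i}) → {v : V // v ∈ parts j.1})

/-- The set of `G`-vertices appearing in a tuple. -/
def DispVert.verts {V : Type} {k m : ℕ} {parts : Fin k → Finset V}
    {I : Fin m → Finset (Fin k)} (x : DispVert parts I) : Set V :=
  Set.range fun j => (x.2 j).1

/-- the disperser product of a multipartite clique instance: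
completeness (a multicolored `k`-clique yields a multicolored `m`-clique) and
soundness (an `r`-clique yields a clique of size at least `s` in `G`). -/
theorem stmt_5 {V : Type} [Fintype V] [DecidableEq V]
    (G : SimpleGraph V) (k m ℓ r s : ℕ)
    (hk : 0 < k) (hm : 0 < m) (hℓ : 0 < ℓ) (hr : 2 ≤ r) (hs : 0 < s)
    (parts : Fin k → Finset V)
    (hdisj : ∀ i j : Fin k, i ≠ j → Disjoint (parts i) (parts j))
    (hcover : ∀ v : V, ∃ i : Fin k, v ∈ parts i)
    (hindep : ∀ i : Fin k, ∀ v ∈ parts i, ∀ w ∈ parts i, ¬ G.Adj v w)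
    (I : Fin m → Finset (Fin k)) (hIinj : Function.Injective I)
    (hIcard : ∀ i : Fin m, (I i).card = ℓ)
    (hdisperse : ∀ T : Finset (Fin m), T.card = r → s ≤ (T.biUnion I).card)
    (G' : SimpleGraph (DispVert parts I))
    (hG' : ∀ x y : DispVert parts I,
      G'.Adj x y ↔ x ≠ y ∧ G.IsClique (x.verts ∪ y.verts)) :
    ((∃ v : Fin k → V, (∀ i : Fin k, v i ∈ parts i) ∧
        ∀ i j : Fin k, i ≠ j → G.Adj (v i) (v j)) →
      ∃ c : Fin m → DispVert parts I,
        (∀ i : Fin m, (c i).1 = i) ∧ G'.IsClique (Set.range c)) ∧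
    ((∃ t : Finset (DispVert parts I), G'.IsClique ↑t ∧ t.card = r) →
      ∃ t : Finset V, G.IsClique ↑t ∧ s ≤ t.card) := by
  constructor
  · rintro ⟨v, hv, hadj⟩
    refine ⟨fun i => ⟨i, fun j => ⟨v j.1, hv j.1⟩⟩, fun i => rfl, ?_⟩
    rintro x ⟨i, rfl⟩ y ⟨i', rfl⟩ hxy
    refine (hG' _ _).2 ?_
    refine ⟨hxy, ?_⟩
    rintro a ha b hb hab
    have h1 : ∃ ja : Fin k, v ja = a := by
      rcases ha with ⟨ja, hja⟩ | ⟨ja, hja⟩ <;> exact ⟨ja.1, hja⟩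
    have h2 : ∃ jb : Fin k, v jb = b := by
      rcases hb with ⟨jb, hjb⟩ | ⟨jb, hjb⟩ <;> exact ⟨jb.1, hjb⟩
    obtain ⟨ja, rfl⟩ := h1
    obtain ⟨jb, rfl⟩ := h2
    exact hadj ja jb (fun h => hab (by rw [h]))
  · rintro ⟨T, hT, hTcard⟩
    have hpair : ∀ x ∈ T, ∀ y ∈ T, x ≠ y → G.IsClique (x.verts ∪ y.verts) :=
      fun x hx y hy hxy => ((hG' x y).1 (hT hx hy hxy)).2
    have hself : ∀ x ∈ T, G.IsClique x.verts := by
      intro x hx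
      have h1 : 1 < T.card := by omega
      obtain ⟨y, hy, z, hz, hyz⟩ := Finset.one_lt_card.mp h1
      by_cases h : y = x
      · subst h
        exact ((hpair y hy z hz hyz).subset Set.subset_union_left)
      · exact ((hpair x hx y hy (fun e => h e.symm)).subset Set.subset_union_left)
    -- distinct first coordinates
    have hfst : ∀ x ∈ T, ∀ y ∈ T, x.1 = y.1 → x = y := by
      rintro ⟨i, f⟩ hx ⟨i', g⟩ hy (h : i = i')
      subst h
      by_contra hne
      have hfg : f ≠ g := fun h => hne (by rw [h])
      obtain ⟨j, hj⟩ := Function.ne_iff.mp hfg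
      have hval : (f j).1 ≠ (g j).1 := fun h => hj (Subtype.ext h)
      have hcl := hpair _ hx _ hy hne
      have hadj := hcl (Set.mem_union_left _ ⟨j, rfl⟩) (Set.mem_union_right _ ⟨j, rfl⟩) hval
      exact hindep j.1 _ (f j).2 _ (g j).2 hadj
    set T' : Finset (Fin m) := T.image Sigma.fst with hT'
    have hT'card : T'.card = r := by
      rw [hT']; refine (Finset.card_image_of_injOn ?_).trans hTcard
      intro x hx y hy h
      exact hfst x hx y hy h
    have hS : s ≤ (T'.biUnion I).card := hdisperse T' hT'card
    set t : Finset V := T.biUnion (fun x => (I x.1).attach.image fun j => (x.2 j).1) with ht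
    have hmemt : ∀ x ∈ T, ∀ a, a ∈ x.verts → a ∈ t := by
      rintro x hx a ⟨j, rfl⟩
      rw [ht, Finset.mem_biUnion]
      exact ⟨x, hx, Finset.mem_image.mpr ⟨j, Finset.mem_attach _ _, rfl⟩⟩
    have hmemt' : ∀ a ∈ t, ∃ x ∈ T, a ∈ x.verts := by
      intro a ha
      rw [ht, Finset.mem_biUnion] at ha
      obtain ⟨x, hx, hax⟩ := ha
      obtain ⟨j, _, rfl⟩ := Finset.mem_image.mp hax
      exact ⟨x, hx, ⟨j, rfl⟩⟩
    refine ⟨t, ?_, ?_⟩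
    · intro a ha b hb hab
      obtain ⟨x, hx, hax⟩ := hmemt' a ha
      obtain ⟨y, hy, hby⟩ := hmemt' b hb
      by_cases h : x = y
      · subst h
        exact hself x hx hax hby hab
      · exact hpair x hx y hy h (Set.mem_union_left _ hax) (Set.mem_union_right _ hby) hab
    · have hchoice : ∀ j ∈ T'.biUnion I, ∃ a : V, a ∈ parts j ∧ a ∈ t := by
        intro j hj
        rw [Finset.mem_biUnion] at hj
        obtain ⟨i, hi, hji⟩ := hj
        obtain ⟨x, hx, rfl⟩ := Finset.mem_image.mp hi
        exact ⟨(x.2 ⟨j, hji⟩).1, (x.2 ⟨j, hji⟩).2, hmemt x hx _ ⟨⟨j, hji⟩, rfl⟩⟩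
      have hVne : Nonempty V := by
        have hpos : 0 < (T'.biUnion I).card := lt_of_lt_of_le hs hS
        obtain ⟨j0, hj0⟩ := Finset.card_pos.mp hpos
        obtain ⟨a0, _, _⟩ := hchoice j0 hj0
        exact ⟨a0⟩
      choose! f hf1 hf2 using hchoice
      calc s ≤ (T'.biUnion I).card := hS
        _ ≤ t.card := by
          apply Finset.card_le_card_of_injOn f hf2
          intro j hj j' hj' h
          by_contra hne
          exact Finset.disjoint_left.mp (hdisj j j' hne) (hf1 j hj) (h ▸ hf1 j' hj')
end

section
/- Let G be a simple graph whose vertex set is partitioned into k disjoint parts V_1, …, V_k, each an independent set, and let ε ∈ (0,1) and r be a positive integer. Let I_1, …, I_m ⊆ [k] be subsets, each of size ℓ, such that the union of any r distinct subsets among them has size at least (1 − ε/2)·k. Define a simple graph H whose vertex set is the disjoint union of parts 𝒱_1, …, 𝒱_m, where 𝒱_i consists of all tuples (u_j)_{j ∈ I_i} with u_j ∈ V_j for each j ∈ I_i, and where two distinct tuples are adjacent in H if and only if the set of all G-vertices appearing in the two tuples is a clique in G. Then: (i) if G contains vertices v_1 ∈ V_1, …, v_k ∈ V_k forming a clique of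 size k, then H contains a clique of size m with exactly one vertex in each part; and (ii) if there exist 2r vertices u_1 ∈ 𝒱_{a_1}, …, u_r ∈ 𝒱_{a_r}, w_1 ∈ 𝒱_{b_1}, …, w_r ∈ 𝒱_{b_r}, where the indices a_1, …, a_r, b_1, …, b_r ∈ [m] are pairwise distinct, such that every u_s is adjacent to every w_t in H, then G contains a clique of size at least (1 − ε)·k. -/
/-- the disperser product graph `H`: completeness, and a
multicolored `K_{r,r}` in `H` yields a clique of size at least `(1−ε)k`
in `G`. -/
theorem stmt_6 {V : Type} [Fintype V] [DecidableEq V]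
    (G : SimpleGraph V) (k m ℓ r : ℕ) (ε : ℝ)
    (hk : 0 < k) (hm : 0 < m) (hℓ : 0 < ℓ) (hr : 0 < r) (hε : 0 < ε ∧ ε < 1)
    (parts : Fin k → Finset V)
    (hdisj : ∀ i j : Fin k, i ≠ j → Disjoint (parts i) (parts j))
    (hcover : ∀ v : V, ∃ i : Fin k, v ∈ parts i)
    (hindep : ∀ i : Fin k, ∀ v ∈ parts i, ∀ w ∈ parts i, ¬ G.Adj v w)
    (I : Fin m → Finset (Fin k)) (hIcard : ∀ i : Fin m, (I i).card = ℓ)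
    (hdisperse : ∀ T : Finset (Fin m), T.card = r →
      ((T.biUnion I).card : ℝ) ≥ (1 - ε / 2) * k)
    (H : SimpleGraph (DispVert parts I))
    (hH : ∀ x y : DispVert parts I,
      H.Adj x y ↔ x ≠ y ∧ G.IsClique (x.verts ∪ y.verts)) :
    ((∃ v : Fin k → V, (∀ i : Fin k, v i ∈ parts i) ∧
        ∀ i j : Fin k, i ≠ j → G.Adj (v i) (v j)) →
      ∃ c : Fin m → DispVert parts I,
        (∀ i : Fin m, (c i).1 = i) ∧ H.IsClique (Set.range c)) ∧
    ((∃ (a b : Fin r → Fin m) (u w : Fin r → DispVert parts I),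
        Function.Injective (Sum.elim a b : Fin r ⊕ Fin r → Fin m) ∧
        (∀ t : Fin r, (u t).1 = a t) ∧ (∀ t : Fin r, (w t).1 = b t) ∧
        ∀ t t' : Fin r, H.Adj (u t) (w t')) →
      ∃ t : Finset V, G.IsClique ↑t ∧ (1 - ε) * k ≤ (t.card : ℝ)) := by
  constructor
  · rintro ⟨v, hv, hcl⟩
    refine ⟨fun i => ⟨i, fun j => ⟨v j.1, hv j.1⟩⟩, fun i => rfl, ?_⟩
    have hrange : G.IsClique (Set.range v) := by
      rintro _ ⟨p, rfl⟩ _ ⟨q, rfl⟩ hne'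
      exact hcl p q (fun h => hne' (by rw [h]))
    rintro x ⟨i, rfl⟩ y ⟨i', rfl⟩ hne
    refine (hH _ _).2 ?_
    refine ⟨hne, hrange.subset ?_⟩
    rintro z (⟨j, rfl⟩ | ⟨j, rfl⟩) <;> exact ⟨j.1, rfl⟩
  · rintro ⟨a, b, u, w, hinj, hu, hw, hadj⟩
    have ha : Function.Injective a := fun s s' h =>
      Sum.inl.inj (hinj (show Sum.elim a b (Sum.inl s) = Sum.elim a b (Sum.inl s') from h))
    have hb : Function.Injective b := fun s s' h =>
      Sum.inr.inj (hinj (show Sum.elim a b (Sum.inr s) = Sum.elim a b (Sum.inr s') from h))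
    set A := (Finset.image a Finset.univ).biUnion I with hA
    set B := (Finset.image b Finset.univ).biUnion I with hB
    have hAmem : ∀ j ∈ A, ∃ t, j ∈ I (a t) := by
      intro j hj
      rw [hA, Finset.mem_biUnion] at hj
      obtain ⟨i, hi, hji⟩ := hj
      obtain ⟨t, _, rfl⟩ := Finset.mem_image.1 hi
      exact ⟨t, hji⟩
    have hBmem : ∀ j ∈ B, ∃ t, j ∈ I (b t) := by
      intro j hj
      rw [hB, Finset.mem_biUnion] at hj
      obtain ⟨i, hi, hji⟩ := hj
      obtain ⟨t, _, rfl⟩ := Finset.mem_image.1 hi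
      exact ⟨t, hji⟩
    choose ta hta using hAmem
    choose tb htb using hBmem
    have memu : ∀ (t : Fin r) (j : Fin k), j ∈ I (a t) → j ∈ I (u t).1 := by
      intro t j h; rw [hu t]; exact h
    have memw : ∀ (t : Fin r) (j : Fin k), j ∈ I (b t) → j ∈ I (w t).1 := by
      intro t j h; rw [hw t]; exact h
    set zu : (t : Fin r) → (j : Fin k) → j ∈ I (a t) → V :=
      fun t j h => ((u t).2 ⟨j, memu t j h⟩).1 with hzu
    set zw : (t : Fin r) → (j : Fin k) → j ∈ I (b t) → V :=
      fun t j h => ((w t).2 ⟨j, memw t j h⟩).1 with hzw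
    have hzu_parts : ∀ t j h, zu t j h ∈ parts j := fun t j h => ((u t).2 ⟨j, memu t j h⟩).2
    have hzw_parts : ∀ t j h, zw t j h ∈ parts j := fun t j h => ((w t).2 ⟨j, memw t j h⟩).2
    have hzu_verts : ∀ t j h, zu t j h ∈ (u t).verts := fun t j h => ⟨⟨j, memu t j h⟩, rfl⟩
    have hzw_verts : ∀ t j h, zw t j h ∈ (w t).verts := fun t j h => ⟨⟨j, memw t j h⟩, rfl⟩
    have agree : ∀ t t' j h h', zu t j h = zw t' j h' := by
      intro t t' j h h'
      by_contra hne
      have hcl : G.IsClique ((u t).verts ∪ (w t').verts) := ((hH _ _).1 (hadj t t')).2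
      exact hindep j _ (hzu_parts t j h) _ (hzw_parts t' j h')
        (hcl (Or.inl (hzu_verts t j h)) (Or.inr (hzw_verts t' j h')) hne)
    set z : (j : Fin k) → j ∈ A → V := fun j hj => zu (ta j hj) j (hta j hj) with hz
    have hz_parts : ∀ j hj, z j hj ∈ parts j := fun j hj => hzu_parts (ta j hj) j (hta j hj)
    have hz_ne : ∀ j hj j' hj', j ≠ j' → z j hj ≠ z j' hj' := by
      intro j hj j' hj' hne heq
      have := Finset.disjoint_left.1 (hdisj j j' hne) (hz_parts j hj)
      rw [heq] at this
      exact this (hz_parts j' hj')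
    have hadjz : ∀ j hj j' hj', j' ∈ B → j ≠ j' → G.Adj (z j hj) (z j' hj') := by
      intro j hj j' hj' hjB hne
      have hrw : z j' hj' = zw (tb j' hjB) j' (htb j' hjB) := by
        exact agree (ta j' hj') (tb j' hjB) j' (hta j' hj') (htb j' hjB)
      rw [hrw]
      have hcl : G.IsClique ((u (ta j hj)).verts ∪ (w (tb j' hjB)).verts) :=
        ((hH _ _).1 (hadj _ _)).2
      refine hcl (Or.inl (hzu_verts (ta j hj) j (hta j hj)))
        (Or.inr (hzw_verts (tb j' hjB) j' (htb j' hjB))) ?_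
      intro heq
      have this1 := Finset.disjoint_left.1 (hdisj j j' hne) (hz_parts j hj)
      have h2 := hzw_parts (tb j' hjB) j' (htb j' hjB)
      rw [← heq] at h2
      exact this1 h2
    set f : {x // x ∈ A ∩ B} → V :=
      fun p => z p.1 (Finset.mem_of_mem_inter_left p.2) with hf
    have hfinj : Function.Injective f := by
      intro p q h
      by_contra hpq
      exact hz_ne _ _ _ _ (fun hpq1 => hpq (Subtype.ext hpq1)) h
    refine ⟨(A ∩ B).attach.image f, ?_, ?_⟩
    · intro x hx y hy hne
      simp only [Finset.coe_image, Set.mem_image, Finset.mem_coe, Finset.mem_attach] at hx hy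
      obtain ⟨p, _, rfl⟩ := hx
      obtain ⟨q, _, rfl⟩ := hy
      have hpq : p.1 ≠ q.1 := fun h => hne (congrArg f (Subtype.ext h))
      exact hadjz _ _ _ _ (Finset.mem_of_mem_inter_right q.2) hpq
    · have hcard : ((A ∩ B).attach.image f).card = (A ∩ B).card := by
        rw [Finset.card_image_of_injective _ hfinj, Finset.card_attach]
      rw [hcard]
      have h1 : ((A.card : ℝ)) ≥ (1 - ε / 2) * k := by
        apply hdisperse
        rw [Finset.card_image_of_injective _ ha, Finset.card_univ, Fintype.card_fin]
      have h2 : ((B.card : ℝ)) ≥ (1 - ε / 2) * k := by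
        apply hdisperse
        rw [Finset.card_image_of_injective _ hb, Finset.card_univ, Fintype.card_fin]
      have h3 : (A ∪ B).card ≤ k := by
        calc (A ∪ B).card ≤ (Finset.univ : Finset (Fin k)).card :=
              Finset.card_le_card (Finset.subset_univ _)
          _ = k := by rw [Finset.card_univ, Fintype.card_fin]
      have h4 : (A ∪ B).card + (A ∩ B).card = A.card + B.card :=
        Finset.card_union_add_card_inter A B
      have h3' : ((A ∪ B).card : ℝ) ≤ k := by exact_mod_cast h3
      have h4' : ((A ∪ B).card : ℝ) + (A ∩ B).card = A.card + B.card := by exact_mod_cast h4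
      linarith
end

section
/- Let R be a commutative ring, r a positive integer, d = 2r + 1, and λ₁, λ₂ ∈ R. Define the (d+1)×(d+1) matrix A over R, with rows and columns indexed by 0, …, d, by: for 0 ≤ i ≤ r, A_{ij} = C(j, i)·i!·λ₁^{j−i} if j ≥ i and A_{ij} = 0 otherwise; and for r < i ≤ d, A_{ij} = C(j, i − (r+1))·(i − (r+1))!·λ₂^{j − (i − (r+1))} if j ≥ i − (r+1) and A_{ij} = 0 otherwise. Then det(A) = (λ₂ − λ₁)^{(r+1)²} · ∏_{i=1}^{r} (i!)². -/
open Finset Matrix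

namespace Stmt8Aux

variable {R : Type} [CommRing R]

/-- Pascal-type entry. -/
def pent (x : R) (a b : ℕ) : R :=
  if a ≤ b then (b.choose a : R) * x ^ (b - a) else 0

lemma pent_key (N : ℕ) (x y : R) (a b : ℕ) (hb : b < N) :
    ∑ m ∈ Finset.range N, pent x a m * pent y m b = pent (x + y) a b := by
  by_cases hab : a ≤ b
  · have h1 : ∀ m ∈ Finset.range N,
        pent x a m * pent y m b = if m ∈ Finset.Icc a b then
          ((b.choose m * m.choose a : ℕ) : R) * (x ^ (m - a) * y ^ (b - m)) else 0 := by
      intro m _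
      unfold pent
      by_cases h1 : a ≤ m <;> by_cases h2 : m ≤ b <;>
        simp only [h1, h2, if_true, if_false, Finset.mem_Icc, and_true, and_false,
          true_and, false_and, mul_zero, zero_mul] <;>
      · push_cast
        ring
    have hsub : Finset.range N ∩ Finset.Icc a b = Finset.Icc a b := by
      refine Finset.inter_eq_right.mpr fun m hm => Finset.mem_range.mpr ?_
      simp only [Finset.mem_Icc] at hm
      omega
    rw [Finset.sum_congr rfl h1, Finset.sum_ite_mem, hsub, ← Finset.Ico_add_one_right_eq_Icc,
      Finset.sum_Ico_eq_sum_range]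
    have hba : b + 1 - a = (b - a) + 1 := by omega
    rw [hba]
    unfold pent
    rw [if_pos hab, add_pow, Finset.mul_sum]
    refine Finset.sum_congr rfl ?_
    intro t ht
    simp only [Finset.mem_range] at ht
    have ht' : t ≤ b - a := by omega
    have h2 : a + t ≤ b := by omega
    have h3 : a + t - a = t := by omega
    have h4 : b - (a + t) = b - a - t := by omega
    have h5 : b.choose (a + t) * (a + t).choose a = b.choose a * (b - a).choose t := by
      rw [Nat.choose_mul (Nat.le_add_right a t), h3]
    rw [h3, h4, h5]
    push_cast
    ring
  · rw [pent, if_neg hab]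
    refine Finset.sum_eq_zero fun m _ => ?_
    unfold pent
    split_ifs with h1 h2
    · exact absurd (le_trans h1 h2) hab
    · rw [mul_zero]
    · rw [zero_mul]
    · rw [zero_mul]

lemma nat_key (m l n k : ℕ) (hk : k < n) :
    ∑ j ∈ Finset.range n, (if j ≤ k then m.choose (k - j) else 0) * l.choose j
      = (m + l).choose k := by
  rw [Nat.add_choose_eq, Finset.Nat.sum_antidiagonal_eq_sum_range_succ_mk]
  rw [← Finset.sum_subset (Finset.range_subset_range.mpr (by omega : k + 1 ≤ n))
    (fun x _ hx => by
      rw [if_neg (by simp only [Finset.mem_range] at hx; omega), zero_mul])]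
  rw [← Finset.sum_range_reflect (fun j => m.choose j * l.choose (k - j)) (k + 1)]
  refine Finset.sum_congr rfl fun j hj => ?_
  simp only [Finset.mem_range] at hj
  have hj' : j ≤ k := by omega
  rw [if_pos hj']
  have h1 : k + 1 - 1 - j = k - j := by omega
  have h2 : k - (k - j) = j := by omega
  rw [h1, h2, mul_comm]

end Stmt8Aux

open Stmt8Aux

theorem stmt_8 {R : Type} [CommRing R] (r : ℕ) (hr : 0 < r) (lam₁ lam₂ : R) :
    (Matrix.of fun i j : Fin (2 * r + 1 + 1) =>
        if (i : ℕ) ≤ r then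
          (if (i : ℕ) ≤ (j : ℕ) then
            ((((j : ℕ).choose (i : ℕ)) * Nat.factorial (i : ℕ) : ℕ) : R)
              * lam₁ ^ ((j : ℕ) - (i : ℕ))
          else 0)
        else
          (if (i : ℕ) - (r + 1) ≤ (j : ℕ) then
            ((((j : ℕ).choose ((i : ℕ) - (r + 1)))
                * Nat.factorial ((i : ℕ) - (r + 1)) : ℕ) : R)
              * lam₂ ^ ((j : ℕ) - ((i : ℕ) - (r + 1)))
          else 0)).det
      = (lam₂ - lam₁) ^ ((r + 1) ^ 2) * ∏ i ∈ Finset.Icc 1 r, ((Nat.factorial i : R)) ^ 2 := by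
  set N := 2 * r + 1 + 1 with hN
  set μ : R := lam₂ - lam₁ with hμ
  -- the matrix of pure pascal rows
  set G : Matrix (Fin N) (Fin N) R := Matrix.of fun i j =>
    if (i : ℕ) ≤ r then pent lam₁ (i : ℕ) (j : ℕ)
    else pent lam₂ ((i : ℕ) - (r + 1)) (j : ℕ) with hG
  set fct : Fin N → R := fun i =>
    (Nat.factorial (if (i : ℕ) ≤ r then (i : ℕ) else (i : ℕ) - (r + 1)) : R) with hfct
  have hA : (Matrix.of fun i j : Fin N =>
        if (i : ℕ) ≤ r then
          (if (i : ℕ) ≤ (j : ℕ) then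
            ((((j : ℕ).choose (i : ℕ)) * Nat.factorial (i : ℕ) : ℕ) : R)
              * lam₁ ^ ((j : ℕ) - (i : ℕ))
          else 0)
        else
          (if (i : ℕ) - (r + 1) ≤ (j : ℕ) then
            ((((j : ℕ).choose ((i : ℕ) - (r + 1)))
                * Nat.factorial ((i : ℕ) - (r + 1)) : ℕ) : R)
              * lam₂ ^ ((j : ℕ) - ((i : ℕ) - (r + 1)))
          else 0))
      = Matrix.of fun i j => fct i * G i j := by
    ext i j
    simp only [Matrix.of_apply, hG, hfct, pent]
    by_cases hi : (i : ℕ) ≤ r <;>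
      simp only [hi, if_true, if_false] <;>
      split_ifs with h
    · push_cast; ring
    · rw [mul_zero]
    · push_cast; ring
    · rw [mul_zero]
  rw [hA, Matrix.det_mul_column]
  -- the product of factorials
  have hfactprod : (∏ i : Fin N, fct i) = (∏ i ∈ Finset.Icc 1 r, (Nat.factorial i : R)) ^ 2 := by
    have h1 : (∏ i : Fin N, fct i)
        = ∏ i ∈ Finset.range N, (Nat.factorial (if i ≤ r then i else i - (r + 1)) : R) :=
      Fin.prod_univ_eq_prod_range
        (fun i => (Nat.factorial (if i ≤ r then i else i - (r + 1)) : R)) N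
    have hNeq : N = (r + 1) + (r + 1) := by omega
    rw [h1, hNeq, Finset.prod_range_add]
    have h2 : ∀ i ∈ Finset.range (r + 1),
        (Nat.factorial (if i ≤ r then i else i - (r + 1)) : R) = (Nat.factorial i : R) := by
      intro i hi
      simp only [Finset.mem_range] at hi
      rw [if_pos (by omega)]
    have h3 : ∀ i ∈ Finset.range (r + 1),
        (Nat.factorial (if r + 1 + i ≤ r then r + 1 + i else r + 1 + i - (r + 1)) : R)
          = (Nat.factorial i : R) := by
      intro i hi
      have hii : r + 1 + i - (r + 1) = i := by omega
      rw [if_neg (by omega), hii]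
    rw [Finset.prod_congr rfl h2, Finset.prod_congr rfl h3]
    have h4 : Finset.range (r + 1) = insert 0 (Finset.Icc 1 r) := by
      ext x
      simp only [Finset.mem_range, Finset.mem_insert, Finset.mem_Icc]
      omega
    rw [h4, Finset.prod_insert (by simp), Nat.factorial_zero, Nat.cast_one, one_mul, sq]
  -- multiply G by inverse pascal matrix
  set Pm : Matrix (Fin N) (Fin N) R := Matrix.of fun i j => pent (-lam₁) (i : ℕ) (j : ℕ) with hPm
  have hPmdet : Pm.det = 1 := by
    rw [Matrix.det_of_upperTriangular]
    · refine Finset.prod_eq_one fun i _ => ?_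
      simp [hPm, pent]
    · intro i j hij
      simp only [hPm, Matrix.of_apply, pent, id_eq] at hij ⊢
      rw [if_neg (by exact_mod_cast Nat.not_le.mpr (by exact_mod_cast hij))]
  set G' : Matrix (Fin N) (Fin N) R := Matrix.of fun i j =>
    if (i : ℕ) ≤ r then pent (0 : R) (i : ℕ) (j : ℕ)
    else pent μ ((i : ℕ) - (r + 1)) (j : ℕ) with hG'
  have hmul : G * Pm = G' := by
    ext i j
    rw [Matrix.mul_apply]
    by_cases hi : (i : ℕ) ≤ r <;>
      simp only [hG, hG', hPm, Matrix.of_apply, hi, if_true, if_false]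
    · rw [Fin.sum_univ_eq_sum_range (fun m => pent lam₁ (i : ℕ) m * pent (-lam₁) m (j : ℕ)) N,
        pent_key N lam₁ (-lam₁) (i : ℕ) (j : ℕ) j.isLt, add_neg_cancel]
    · rw [Fin.sum_univ_eq_sum_range
        (fun m => pent lam₂ ((i : ℕ) - (r + 1)) m * pent (-lam₁) m (j : ℕ)) N,
        pent_key N lam₂ (-lam₁) _ (j : ℕ) j.isLt, ← sub_eq_add_neg]
  have hGdet : G.det = G'.det := by
    calc G.det = G.det * Pm.det := by rw [hPmdet, mul_one]
    _ = (G * Pm).det := (Matrix.det_mul G Pm).symm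
    _ = G'.det := by rw [hmul]
  rw [hGdet]
  -- reindex into blocks
  have hNsum : r + 1 + (r + 1) = N := by omega
  set e : Fin (r + 1) ⊕ Fin (r + 1) ≃ Fin N := finSumFinEquiv.trans (finCongr hNsum) with he
  have hG'det : G'.det = (G'.submatrix e e).det := (Matrix.det_submatrix_equiv_self e G').symm
  set Bm : Matrix (Fin (r + 1)) (Fin (r + 1)) R := Matrix.of fun k l =>
    μ ^ (r + 1 - (k : ℕ)) * (μ ^ (l : ℕ) * ((r + 1 + (l : ℕ)).choose (k : ℕ) : R)) with hBm
  set Cm : Matrix (Fin (r + 1)) (Fin (r + 1)) R := Matrix.of fun k l =>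
    pent μ (k : ℕ) (l : ℕ) with hCm
  have hblocks : G'.submatrix e e = Matrix.fromBlocks 1 0 Cm Bm := by
    ext i j
    rcases i with i | i <;> rcases j with j | j <;>
      simp only [Matrix.submatrix_apply, he, Equiv.trans_apply, finCongr_apply,
        finSumFinEquiv_apply_left, finSumFinEquiv_apply_right, Fin.coe_cast,
        Fin.coe_castAdd, Fin.coe_natAdd, hG', Matrix.of_apply,
        Matrix.fromBlocks_apply₁₁, Matrix.fromBlocks_apply₁₂,
        Matrix.fromBlocks_apply₂₁, Matrix.fromBlocks_apply₂₂]
    · -- top-left : identity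
      rw [if_pos (by omega : (i : ℕ) ≤ r)]
      unfold pent
      rcases lt_trichotomy (i : ℕ) (j : ℕ) with h | h | h
      · rw [if_pos (le_of_lt h), zero_pow (by omega), mul_zero,
          Matrix.one_apply_ne (by simp [Fin.ext_iff]; omega)]
      · have : i = j := Fin.ext h
        subst this
        rw [if_pos le_rfl, Nat.sub_self, pow_zero, Nat.choose_self, Nat.cast_one,
          mul_one, Matrix.one_apply_eq]
      · rw [if_neg (by omega), Matrix.one_apply_ne (by simp [Fin.ext_iff]; omega)]
    · -- top-right : zero
      rw [if_pos (by omega : (i : ℕ) ≤ r)]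
      unfold pent
      rw [if_pos (by omega), zero_pow (by omega), mul_zero]
      rfl
    · -- bottom-left
      rw [if_neg (by omega), hCm]
      have : r + 1 + (i : ℕ) - (r + 1) = (i : ℕ) := by omega
      rw [this]
      rfl
    · -- bottom-right
      rw [if_neg (by omega), hBm]
      have h1 : r + 1 + (i : ℕ) - (r + 1) = (i : ℕ) := by omega
      rw [h1]
      unfold pent
      rw [if_pos (by omega)]
      have h2 : r + 1 + (j : ℕ) - (i : ℕ) = (r + 1 - (i : ℕ)) + (j : ℕ) := by omega
      rw [h2, pow_add, Matrix.of_apply]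
      ring
  rw [hG'det, hblocks, Matrix.det_fromBlocks_zero₁₂, Matrix.det_one, one_mul]
  -- peel off the powers of μ
  have hdetB : Bm.det = (∏ k : Fin (r + 1), μ ^ (r + 1 - (k : ℕ))) *
      ((∏ l : Fin (r + 1), μ ^ (l : ℕ)) *
        (Matrix.of fun k l : Fin (r + 1) => ((r + 1 + (l : ℕ)).choose (k : ℕ) : R)).det) := by
    have s1 : Bm.det = (∏ k : Fin (r + 1), μ ^ (r + 1 - (k : ℕ))) *
        (Matrix.of fun k l : Fin (r + 1) =>
          μ ^ (l : ℕ) * ((r + 1 + (l : ℕ)).choose (k : ℕ) : R)).det :=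
      Matrix.det_mul_column _ _
    have s2 : (Matrix.of fun k l : Fin (r + 1) =>
          μ ^ (l : ℕ) * ((r + 1 + (l : ℕ)).choose (k : ℕ) : R)).det
        = (∏ l : Fin (r + 1), μ ^ (l : ℕ)) *
          (Matrix.of fun k l : Fin (r + 1) => ((r + 1 + (l : ℕ)).choose (k : ℕ) : R)).det :=
      Matrix.det_mul_row _ _
    rw [s1, s2]
  -- determinant of binomial matrix is 1
  have hbinom : (Matrix.of fun k l : Fin (r + 1) =>
      ((r + 1 + (l : ℕ)).choose (k : ℕ) : R)).det = 1 := by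
    have hLU : (Matrix.of fun k l : Fin (r + 1) => ((r + 1 + (l : ℕ)).choose (k : ℕ) : R)) =
        (Matrix.of fun k j : Fin (r + 1) =>
          if (j : ℕ) ≤ (k : ℕ) then (((r + 1).choose ((k : ℕ) - (j : ℕ)) : ℕ) : R) else 0) *
        (Matrix.of fun j l : Fin (r + 1) => (((l : ℕ).choose (j : ℕ) : ℕ) : R)) := by
      ext k l
      rw [Matrix.mul_apply]
      simp only [Matrix.of_apply]
      rw [Fin.sum_univ_eq_sum_range (fun j =>
        (if j ≤ (k : ℕ) then (((r + 1).choose ((k : ℕ) - j) : ℕ) : R) else 0)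
          * (((l : ℕ).choose j : ℕ) : R)) (r + 1)]
      have hc : ∀ j ∈ Finset.range (r + 1),
          (if j ≤ (k : ℕ) then (((r + 1).choose ((k : ℕ) - j) : ℕ) : R) else 0)
              * (((l : ℕ).choose j : ℕ) : R)
            = ((((if j ≤ (k : ℕ) then (r + 1).choose ((k : ℕ) - j) else 0)
                * (l : ℕ).choose j : ℕ)) : R) := by
        intro j _
        split_ifs <;> push_cast <;> ring
      rw [Finset.sum_congr rfl hc, ← Nat.cast_sum,
        nat_key (r + 1) (l : ℕ) (r + 1) (k : ℕ) k.isLt]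
    rw [hLU, Matrix.det_mul, Matrix.det_of_lowerTriangular _ ?hL,
      Matrix.det_of_upperTriangular ?hU]
    · rw [Finset.prod_congr rfl (fun i _ => ?_), Finset.prod_const_one,
        Finset.prod_congr rfl (fun i _ => ?_), Finset.prod_const_one, one_mul]
      · simp
      · simp
    case hL =>
      intro i j hij
      simp only [OrderDual.toDual_lt_toDual] at hij
      simp only [Matrix.of_apply]
      rw [if_neg (by exact_mod_cast Nat.not_le.mpr (by exact_mod_cast hij))]
    case hU =>
      intro i j hij
      simp only [id_eq] at hij
      simp only [Matrix.of_apply]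
      rw [Nat.choose_eq_zero_of_lt (by exact_mod_cast hij), Nat.cast_zero]
  -- powers of μ combine
  have hpow : (∏ i : Fin (r + 1), μ ^ (r + 1 - (i : ℕ)))
      * (∏ i : Fin (r + 1), μ ^ (i : ℕ)) = μ ^ ((r + 1) ^ 2) := by
    rw [← Finset.prod_mul_distrib]
    have : ∀ i : Fin (r + 1), μ ^ (r + 1 - (i : ℕ)) * μ ^ (i : ℕ) = μ ^ (r + 1) := by
      intro i
      rw [← pow_add]
      congr 1
      omega
    rw [Finset.prod_congr rfl fun i _ => this i, Finset.prod_const, Finset.card_univ,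
      Fintype.card_fin, ← pow_mul, sq]
  rw [hdetB, hbinom, mul_one, hfactprod, ← hpow, ← Finset.prod_pow]
  ring
end

section
/- Let 𝔽 be a finite field and d, m positive integers with |𝔽| > d and C(m+d, d) ≤ |𝔽|^m. Let P denote the 𝔽-vector space of m-variate polynomials over 𝔽 of total degree at most d, and let N = C(m+d, d) (the dimension of P). Then the evaluation map from P to the space of functions 𝔽^m → 𝔽 is injective, and there exist points u_1, …, u_N ∈ 𝔽^m such that the linear map P → 𝔽^N sending p to (p(u_1), …, p(u_N)) is bijective; in particular, for every tuple (a_1, …, a_N) ∈ 𝔽^N there exists a unique m-variate polynomial p of total degree at most d with p(u_i) = a_i for all i ∈ [N]. -/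
open Finset in
noncomputable def eqA (m d : ℕ) :
    {n : Fin m →₀ ℕ // (n.sum fun _ e => e) ≤ d} ≃ {c : Fin m → ℕ // ∑ i, c i ≤ d} :=
  (Finsupp.equivFunOnFinite).subtypeEquiv fun n => by
    rw [Finsupp.sum_fintype _ _ (fun _ => rfl)]; rfl

open Finset in
def eqB (m d : ℕ) : {c : Fin m → ℕ // ∑ i, c i ≤ d} ≃ {c : Fin (m+1) → ℕ // ∑ i, c i = d} where
  toFun c := ⟨Fin.snoc c.1 (d - ∑ i, c.1 i), by
    rw [Fin.sum_univ_castSucc]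
    simp only [Fin.snoc_castSucc, Fin.snoc_last]
    omega⟩
  invFun c := ⟨Fin.init c.1, by
    have := c.2; rw [Fin.sum_univ_castSucc] at this
    simp only [Fin.init]; omega⟩
  left_inv c := by
    ext i
    simp [Fin.init_snoc]
  right_inv c := by
    have := c.2; rw [Fin.sum_univ_castSucc] at this
    ext i
    have h : d - ∑ i, Fin.init c.1 i = c.1 (Fin.last m) := by
      simp only [Fin.init]; omega
    rw [Subtype.coe_mk, h, Fin.snoc_init_self]

noncomputable def eqC1 (m d : ℕ) :
    {c : Fin (m+1) → ℕ // ∑ i, c i = d} ≃ {n : Fin (m+1) →₀ ℕ // (n.sum fun _ e => e) = d} :=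
  ((Finsupp.equivFunOnFinite (α := Fin (m+1)) (M := ℕ)).subtypeEquiv fun n => by
      rw [Finsupp.sum_fintype _ _ (fun _ => rfl)]; rfl).symm

noncomputable def eqC2 (m d : ℕ) :
    {n : Fin (m+1) →₀ ℕ // (n.sum fun _ e => e) = d} ≃ Sym (Fin (m+1)) d where
  toFun n := ⟨Finsupp.toMultiset n.1, by rw [Finsupp.card_toMultiset]; exact n.2⟩
  invFun s := ⟨Multiset.toFinsupp s.1, by
    have := Multiset.toFinsupp_sum_eq s.1; rw [s.2] at this; exact this⟩
  left_inv n := Subtype.ext (Finsupp.toMultiset_toFinsupp n.1)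
  right_inv s := Subtype.ext (Multiset.toFinsupp_toMultiset s.1)

noncomputable def eqC (m d : ℕ) :
    {c : Fin (m+1) → ℕ // ∑ i, c i = d} ≃ Sym (Fin (m+1)) d :=
  (eqC1 m d).trans (eqC2 m d)

noncomputable instance instFT (m d : ℕ) :
    Fintype {n : Fin m →₀ ℕ // (n.sum fun _ e => e) ≤ d} :=
  Fintype.ofEquiv _ ((eqA m d).trans ((eqB m d).trans (eqC m d))).symm

theorem card_bounded (m d : ℕ) :
    Fintype.card {n : Fin m →₀ ℕ // (n.sum fun _ e => e) ≤ d} = (m + d).choose d := by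
  rw [Fintype.card_congr ((eqA m d).trans ((eqB m d).trans (eqC m d)))]
  rw [Sym.card_sym_eq_multichoose, Nat.multichoose_eq, Fintype.card_fin]
  congr 1
  omega

theorem finrank_rtd (𝔽 : Type) [Field 𝔽] (m d : ℕ) :
    Module.finrank 𝔽 (MvPolynomial.restrictTotalDegree (Fin m) 𝔽 d) = (m + d).choose d := by
  classical
  have b := MvPolynomial.basisRestrictSupport 𝔽
    { n : Fin m →₀ ℕ | (n.sum fun _ e => e) ≤ d }
  letI : Fintype ↑{ n : Fin m →₀ ℕ | (n.sum fun _ e => e) ≤ d } := instFT m d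
  exact (Module.finrank_eq_card_basis b).trans
    ((Fintype.card_congr' rfl).trans (card_bounded m d))

theorem eval_zero_of_deg_lt {𝔽 : Type} [Field 𝔽] [Fintype 𝔽] {d m : ℕ}
    (hcard : d < Fintype.card 𝔽) (p : MvPolynomial (Fin m) 𝔽)
    (hp : p ∈ MvPolynomial.restrictTotalDegree (Fin m) 𝔽 d)
    (h : ∀ x : Fin m → 𝔽, MvPolynomial.eval x p = 0) : p = 0 := by
  apply MvPolynomial.eq_zero_of_eval_eq_zero (σ := Fin m) (K := 𝔽) p h
  have h1 : p ∈ MvPolynomial.restrictDegree (Fin m) 𝔽 d :=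
    MvPolynomial.restrictTotalDegree_le_restrictDegree _ _ d hp
  have h2 : MvPolynomial.restrictDegree (Fin m) 𝔽 d ≤
      MvPolynomial.restrictDegree (Fin m) 𝔽 (Fintype.card 𝔽 - 1) :=
    MvPolynomial.restrictSupport_mono (R := 𝔽) fun n hn i => le_trans (hn i) (by omega)
  exact h2 h1

/-- over a finite field `𝔽` with `|𝔽| > d` and
`C(m+d,d) ≤ |𝔽|^m`, the evaluation map on `m`-variate polynomials of total
degree at most `d` is injective, and there are `N = C(m+d,d)` points whose
evaluations determine (bijectively) such polynomials; in particular every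
prescribed tuple of values at these points is interpolated by a unique
polynomial of total degree at most `d`. -/
theorem stmt_10 {𝔽 : Type} [Field 𝔽] [Fintype 𝔽] (d m : ℕ) (hd : 0 < d) (hm : 0 < m)
    (hcard : d < Fintype.card 𝔽)
    (hdim : (m + d).choose d ≤ (Fintype.card 𝔽) ^ m) :
    (∀ p q : MvPolynomial.restrictTotalDegree (Fin m) 𝔽 d,
      (∀ x : Fin m → 𝔽,
        MvPolynomial.eval x (p : MvPolynomial (Fin m) 𝔽)
          = MvPolynomial.eval x (q : MvPolynomial (Fin m) 𝔽)) → p = q) ∧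
    ∃ u : Fin ((m + d).choose d) → (Fin m → 𝔽),
      Function.Bijective
        (fun (p : MvPolynomial.restrictTotalDegree (Fin m) 𝔽 d)
            (i : Fin ((m + d).choose d)) =>
          MvPolynomial.eval (u i) (p : MvPolynomial (Fin m) 𝔽)) ∧
      ∀ a : Fin ((m + d).choose d) → 𝔽,
        ∃! p : MvPolynomial.restrictTotalDegree (Fin m) 𝔽 d,
          ∀ i, MvPolynomial.eval (u i) (p : MvPolynomial (Fin m) 𝔽) = a i := by
  classical
  set V := MvPolynomial.restrictTotalDegree (Fin m) 𝔽 d with hV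
  set N := (m + d).choose d with hN
  -- evaluation functionals
  let φ : (Fin m → 𝔽) → Module.Dual 𝔽 V := fun x =>
    { toFun := fun p => MvPolynomial.eval x (p : MvPolynomial (Fin m) 𝔽)
      map_add' := fun p q => by simp
      map_smul' := fun c p => by simp [MvPolynomial.smul_eval] }
  have hzero : ∀ p : V, (∀ x : Fin m → 𝔽, φ x p = 0) → p = 0 := fun p h =>
    Subtype.ext (eval_zero_of_deg_lt hcard p.1 p.2 h)
  have hinj : ∀ p q : V,
      (∀ x : Fin m → 𝔽,
        MvPolynomial.eval x (p : MvPolynomial (Fin m) 𝔽)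
          = MvPolynomial.eval x (q : MvPolynomial (Fin m) 𝔽)) → p = q := by
    intro p q h
    have : p - q = 0 := hzero (p - q) (fun x => by
      show MvPolynomial.eval x ((p - q : V) : MvPolynomial (Fin m) 𝔽) = 0
      rw [Submodule.coe_sub, map_sub, h x, sub_self])
    rwa [sub_eq_zero] at this
  refine ⟨hinj, ?_⟩
  haveI : FiniteDimensional 𝔽 V := inferInstance
  have hfr : Module.finrank 𝔽 V = N := finrank_rtd 𝔽 m d
  -- span of evaluation functionals
  set W : Submodule 𝔽 (Module.Dual 𝔽 V) := Submodule.span 𝔽 (Set.range φ) with hW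
  have hco : W.dualCoannihilator = ⊥ := by
    rw [Submodule.eq_bot_iff]
    intro p hp
    rw [Submodule.mem_dualCoannihilator] at hp
    exact hzero p fun x => hp (φ x) (Submodule.subset_span ⟨x, rfl⟩)
  have hWrank : Module.finrank 𝔽 W = N := by
    have := Subspace.finrank_add_finrank_dualCoannihilator_eq W
    rw [hco, finrank_bot, add_zero, hfr] at this
    exact this
  obtain ⟨b, hbsub, hbspan, hbind⟩ := exists_linearIndependent 𝔽 (Set.range φ)
  haveI : Fintype b := hbind.setFinite.fintype
  have hcardb : Fintype.card b = N := by
    have := finrank_span_set_eq_card hbind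
    rw [hbspan, ← hW, hWrank] at this
    rw [this]
    exact (Set.toFinset_card b).symm
  let e : Fin N ≃ b := (Fintype.equivFinOfCardEq hcardb).symm
  have hchoice : ∀ i : Fin N, ∃ x : Fin m → 𝔽, φ x = (e i : Module.Dual 𝔽 V) :=
    fun i => hbsub (e i).2
  choose u hu using hchoice
  refine ⟨u, ?_⟩
  -- the linear evaluation map at the chosen points
  let L : V →ₗ[𝔽] (Fin N → 𝔽) := LinearMap.pi fun i => φ (u i)
  have hLinj : Function.Injective L := by
    rw [← LinearMap.ker_eq_bot, Submodule.eq_bot_iff]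
    intro p hp
    rw [LinearMap.mem_ker] at hp
    have hb0 : ∀ f ∈ b, (f : Module.Dual 𝔽 V) p = 0 := by
      intro f hf
      obtain ⟨i, hi⟩ : ∃ i : Fin N, e i = (⟨f, hf⟩ : b) := ⟨e.symm ⟨f, hf⟩, e.apply_symm_apply _⟩
      have := congrFun hp i
      rwa [show L p i = φ (u i) p from rfl, hu i, hi] at this
    apply hzero
    intro x
    have hxW : φ x ∈ Submodule.span 𝔽 b := by
      rw [hbspan]; exact Submodule.subset_span ⟨x, rfl⟩
    refine Submodule.span_induction (fun f hf => hb0 f hf) (by simp) ?_ ?_ hxW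
    · intro f g _ _ hf hg
      simp [hf, hg]
    · intro c f _ hf
      simp [hf]
  have hLbij : Function.Bijective L := by
    refine ⟨hLinj, ?_⟩
    have hrk : Module.finrank 𝔽 V = Module.finrank 𝔽 (Fin N → 𝔽) := by
      rw [hfr, Module.finrank_fintype_fun_eq_card, Fintype.card_fin]
    exact (LinearMap.injective_iff_surjective_of_finrank_eq_finrank hrk).mp hLinj
  refine ⟨hLbij, ?_⟩
  intro a
  obtain ⟨p, hp⟩ := hLbij.2 a
  refine ⟨p, fun i => congrFun hp i, ?_⟩
  intro q hq
  apply hLbij.1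
  rw [hp]
  funext i
  exact hq i
end

section
/- Let 𝔽 be a finite field, k and ℓ positive integers, x a k×ℓ matrix over 𝔽 with rows x_1, …, x_k ∈ 𝔽^ℓ, f : 𝔽^k → 𝔽^ℓ a function, and δ ∈ [0,1]. Suppose |{a ∈ 𝔽^k : f(a) = xᵀa}| ≥ (1−δ)·|𝔽|^k. Then for every i ∈ [k], |{a ∈ 𝔽^k : f(a + e_i) − f(a) = x_i}| ≥ (1−2δ)·|𝔽|^k, and for all distinct i, j ∈ [k], |{a ∈ 𝔽^k : f(a + e_i + e_j) − f(a) = x_i + x_j}| ≥ (1−2δ)·|𝔽|^k. -/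
open Finset in
lemma aux_union_bound {α : Type} [Fintype α] [DecidableEq α]
    (P Q : α → Prop) [DecidablePred P] [DecidablePred Q] :
    Nat.card {a // P a} + Nat.card {a // Q a}
      ≤ Fintype.card α + Nat.card {a // P a ∧ Q a} := by
  simp only [Nat.card_eq_fintype_card, Fintype.card_subtype]
  have h1 : filter (fun a => P a ∧ Q a) univ
      = filter (fun a => P a) univ ∩ filter (fun a => Q a) univ := by
    ext a; simp
  have h2 := Finset.card_inter_add_card_union
    (filter (fun a => P a) univ) (filter (fun a => Q a) univ)
  have h3 : (filter (fun a => P a) univ ∪ filter (fun a => Q a) univ).card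
      ≤ Fintype.card α :=
    (Finset.card_le_card (Finset.subset_univ _)).trans_eq (by simp)
  rw [h1]
  omega

lemma aux_shift {α : Type} [AddGroup α] (Q : α → Prop) (v : α) :
    Nat.card {a // Q (a + v)} = Nat.card {a // Q a} :=
  Nat.card_congr (Equiv.subtypeEquiv (Equiv.addRight v) (fun _ => Iff.rfl))

lemma aux_key {𝔽 : Type} [Field 𝔽] [Fintype 𝔽] {k ℓ : ℕ}
    (x : Matrix (Fin k) (Fin ℓ) 𝔽) (f : (Fin k → 𝔽) → (Fin ℓ → 𝔽))
    (v : Fin k → 𝔽) (w : Fin ℓ → 𝔽) (hw : x.transpose.mulVec v = w) :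
    2 * Nat.card {a : Fin k → 𝔽 // f a = x.transpose.mulVec a}
      ≤ Fintype.card 𝔽 ^ k + Nat.card {a : Fin k → 𝔽 // f (a + v) - f a = w} := by
  classical
  have h1 := aux_union_bound (fun a : Fin k → 𝔽 => f a = x.transpose.mulVec a)
    (fun a : Fin k → 𝔽 => f (a + v) = x.transpose.mulVec (a + v))
  have h2 : Nat.card {a : Fin k → 𝔽 // f (a + v) = x.transpose.mulVec (a + v)}
      = Nat.card {a : Fin k → 𝔽 // f a = x.transpose.mulVec a} :=
    aux_shift (fun a => f a = x.transpose.mulVec a) v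
  have h3 : Nat.card {a : Fin k → 𝔽 //
        f a = x.transpose.mulVec a ∧ f (a + v) = x.transpose.mulVec (a + v)}
      ≤ Nat.card {a : Fin k → 𝔽 // f (a + v) - f a = w} := by
    apply Nat.card_mono (Set.toFinite _)
    intro a ⟨ha, hav⟩
    show f (a + v) - f a = w
    rw [ha, hav, Matrix.mulVec_add, hw]
    abel
  have hcard : Fintype.card (Fin k → 𝔽) = Fintype.card 𝔽 ^ k := by simp
  omega

/-- local decodability of the parallel Hadamard code. If
`f : 𝔽^k → 𝔽^ℓ` agrees with `a ↦ xᵀa` on at least a `(1−δ)` fraction of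
points, then each row `x_i` (and each sum `x_i + x_j`) can be decoded at
a `(1−2δ)` fraction of points. -/
theorem stmt_11 {𝔽 : Type} [Field 𝔽] [Fintype 𝔽]
    (k ℓ : ℕ) (hk : 0 < k) (hℓ : 0 < ℓ)
    (x : Matrix (Fin k) (Fin ℓ) 𝔽) (f : (Fin k → 𝔽) → (Fin ℓ → 𝔽))
    (δ : ℝ) (hδ : 0 ≤ δ ∧ δ ≤ 1)
    (hf : (Nat.card {a : Fin k → 𝔽 // f a = x.transpose.mulVec a} : ℝ)
        ≥ (1 - δ) * (Fintype.card 𝔽) ^ k) :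
    (∀ i : Fin k,
      (Nat.card {a : Fin k → 𝔽 // f (a + Pi.single i 1) - f a = x i} : ℝ)
        ≥ (1 - 2 * δ) * (Fintype.card 𝔽) ^ k) ∧
    (∀ i j : Fin k, i ≠ j →
      (Nat.card {a : Fin k → 𝔽 //
          f (a + Pi.single i 1 + Pi.single j 1) - f a = x i + x j} : ℝ)
        ≥ (1 - 2 * δ) * (Fintype.card 𝔽) ^ k) := by
  classical
  have hsingle : ∀ i : Fin k, x.transpose.mulVec (Pi.single i 1) = x i := by
    intro i
    ext r
    simp [Matrix.mulVec_single]
  constructor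
  · intro i
    have h := aux_key x f (Pi.single i 1) (x i) (hsingle i)
    have h' : (2 * Nat.card {a : Fin k → 𝔽 // f a = x.transpose.mulVec a} : ℝ)
        ≤ (Fintype.card 𝔽 : ℝ) ^ k
          + Nat.card {a : Fin k → 𝔽 // f (a + Pi.single i 1) - f a = x i} := by
      exact_mod_cast h
    linarith
  · intro i j hij
    have h := aux_key x f (Pi.single i 1 + Pi.single j 1) (x i + x j) (by
      rw [Matrix.mulVec_add, hsingle i, hsingle j])
    simp only [add_assoc]
    have h' : (2 * Nat.card {a : Fin k → 𝔽 // f a = x.transpose.mulVec a} : ℝ)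
        ≤ (Fintype.card 𝔽 : ℝ) ^ k
          + Nat.card {a : Fin k → 𝔽 //
              f (a + (Pi.single i 1 + Pi.single j 1)) - f a = x i + x j} := by
      exact_mod_cast h
    linarith
end

section
/- Let 𝔽 be a finite field and d, m, t positive integers. Let f : 𝔽^m → 𝔽^t be a function, let P be any degree-d line assignment, and let g be any majority function for (f, P). Then Δ(f, g) ≤ 2·δ_P(f). -/
/-- `f` is a degree-`d` polynomial tuple: each coordinate function is the
evaluation of an `m`-variate polynomial of total degree at most `d`. -/
def IsPolyTuple {𝔽 : Type} [CommSemiring 𝔽] (d m t : ℕ)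
    (f : (Fin m → 𝔽) → Fin t → 𝔽) : Prop :=
  ∀ j : Fin t, ∃ p : MvPolynomial (Fin m) 𝔽,
    p.totalDegree ≤ d ∧ ∀ x : Fin m → 𝔽, f x j = MvPolynomial.eval x p

/-- The fraction of points of `𝔽^m` on which `f` and `g` differ. -/
noncomputable def distFn {𝔽 : Type} [Fintype 𝔽] {m t : ℕ}
    (f g : (Fin m → 𝔽) → Fin t → 𝔽) : ℝ :=
  (Nat.card {x : Fin m → 𝔽 // f x ≠ g x} : ℝ) / (Fintype.card 𝔽) ^ m

/-- The line `ℓ(x,h) = {x + λh : λ ∈ 𝔽}`. -/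
def lineSet {𝔽 : Type} [Field 𝔽] {m : ℕ} (x h : Fin m → 𝔽) : Set (Fin m → 𝔽) :=
  {y | ∃ lam : 𝔽, y = x + lam • h}

/-- `Q` restricted to the line `ℓ(x,h)` is (a tuple of) univariate polynomials
of degree at most `d` in the parameter `λ`. -/
def IsDegLine {𝔽 : Type} [Field 𝔽] (d : ℕ) {m t : ℕ} (x h : Fin m → 𝔽)
    (Q : (Fin m → 𝔽) → Fin t → 𝔽) : Prop :=
  ∃ p : Fin t → Polynomial 𝔽, (∀ j : Fin t, (p j).natDegree ≤ d) ∧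
    ∀ lam : 𝔽, Q (x + lam • h) = fun j => Polynomial.eval lam (p j)

/-- A degree-`d` line assignment: to every pair `(x,h)` it assigns a function
which is a degree-`d` polynomial tuple along `ℓ(x,h)`, consistently for pairs
describing the same line. -/
def IsLineAssignment {𝔽 : Type} [Field 𝔽] (d : ℕ) {m t : ℕ}
    (P : (Fin m → 𝔽) → (Fin m → 𝔽) → (Fin m → 𝔽) → Fin t → 𝔽) : Prop :=
  (∀ x h : Fin m → 𝔽, IsDegLine d x h (P x h)) ∧
  (∀ x h x' h' : Fin m → 𝔽, lineSet x h = lineSet x' h' → P x h = P x' h')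

/-- `δ_P(f)`: the fraction of pairs `(x,h)` with `f(x) ≠ P_{x,h}(x)`. -/
noncomputable def deltaP {𝔽 : Type} [Fintype 𝔽] {m t : ℕ}
    (P : (Fin m → 𝔽) → (Fin m → 𝔽) → (Fin m → 𝔽) → Fin t → 𝔽)
    (f : (Fin m → 𝔽) → Fin t → 𝔽) : ℝ :=
  (Nat.card {xh : (Fin m → 𝔽) × (Fin m → 𝔽) // f xh.1 ≠ P xh.1 xh.2 xh.1} : ℝ)
    / ((Fintype.card 𝔽) ^ m * (Fintype.card 𝔽) ^ m)

/-- `g` is a majority function for `(f, P)`: at every point `x`, `g x` is a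
most frequent value among `{P_{x,h}(x) : h ∈ 𝔽^m}`. -/
def IsMajority {𝔽 : Type} [Fintype 𝔽] {m t : ℕ}
    (P : (Fin m → 𝔽) → (Fin m → 𝔽) → (Fin m → 𝔽) → Fin t → 𝔽)
    (g : (Fin m → 𝔽) → Fin t → 𝔽) : Prop :=
  ∀ x : Fin m → 𝔽, ∀ v : Fin t → 𝔽,
    Nat.card {h : Fin m → 𝔽 // P x h x = v}
      ≤ Nat.card {h : Fin m → 𝔽 // P x h x = g x}

/-- `P` is optimal for `f`: on every line, the number of disagreements of
`P_{x,h}` with `f` is minimal among functions that are degree-`d` along the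
line. -/
def IsOptimal {𝔽 : Type} [Field 𝔽] [Fintype 𝔽] (d : ℕ) {m t : ℕ}
    (P : (Fin m → 𝔽) → (Fin m → 𝔽) → (Fin m → 𝔽) → Fin t → 𝔽)
    (f : (Fin m → 𝔽) → Fin t → 𝔽) : Prop :=
  ∀ x h : Fin m → 𝔽, ∀ Q : (Fin m → 𝔽) → Fin t → 𝔽, IsDegLine d x h Q →
    Nat.card {lam : 𝔽 // P x h (x + lam • h) ≠ f (x + lam • h)}
      ≤ Nat.card {lam : 𝔽 // Q (x + lam • h) ≠ f (x + lam • h)}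

/-- any majority function `g` for `(f, P)` satisfies
`Δ(f, g) ≤ 2·δ_P(f)`. -/
theorem stmt_14 {𝔽 : Type} [Field 𝔽] [Fintype 𝔽] (d m t : ℕ)
    (hd : 0 < d) (hm : 0 < m) (ht : 0 < t)
    (f : (Fin m → 𝔽) → Fin t → 𝔽)
    (P : (Fin m → 𝔽) → (Fin m → 𝔽) → (Fin m → 𝔽) → Fin t → 𝔽)
    (hP : IsLineAssignment d P)
    (g : (Fin m → 𝔽) → Fin t → 𝔽) (hg : IsMajority P g) :
    distFn f g ≤ 2 * deltaP P f := by
  classical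
  set N := Fintype.card 𝔽 ^ m with hN
  have hNcard : Fintype.card (Fin m → 𝔽) = N := by simp [hN]
  have hN0 : 0 < N := pow_pos Fintype.card_pos m
  set A := (Finset.univ.filter fun x : Fin m → 𝔽 => f x ≠ g x).card with hA
  set C := fun x : Fin m → 𝔽 => (Finset.univ.filter fun h : Fin m → 𝔽 => f x ≠ P x h x).card with hC
  set B := ∑ x : Fin m → 𝔽, C x with hB
  have hAcard : Nat.card {x : Fin m → 𝔽 // f x ≠ g x} = A := by
    rw [Nat.card_eq_fintype_card, Fintype.card_subtype]
  have hBcard : Nat.card {xh : (Fin m → 𝔽) × (Fin m → 𝔽) // f xh.1 ≠ P xh.1 xh.2 xh.1} = B := by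
    rw [Nat.card_congr (Equiv.subtypeProdEquivSigmaSubtype
      (fun x h : Fin m → 𝔽 => f x ≠ P x h x)), Nat.card_eq_fintype_card,
      Fintype.card_sigma, hB]
    exact Finset.sum_congr rfl fun x _ => Fintype.card_subtype _
  have hkey : ∀ x : Fin m → 𝔽, f x ≠ g x → N ≤ 2 * C x := by
    intro x hx
    set Sf := (Finset.univ.filter fun h : Fin m → 𝔽 => P x h x = f x) with hSf
    set Sg := (Finset.univ.filter fun h : Fin m → 𝔽 => P x h x = g x) with hSg
    have hmaj : Sf.card ≤ Sg.card := by
      have := hg x (f x)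
      rwa [Nat.card_eq_fintype_card, Nat.card_eq_fintype_card,
        Fintype.card_subtype, Fintype.card_subtype] at this
    have hdisj : Disjoint Sf Sg := by
      rw [Finset.disjoint_filter]
      intro h _ hf hgx
      exact hx (hf ▸ hgx)
    have hle : Sf.card + Sg.card ≤ N := by
      rw [← Finset.card_union_of_disjoint hdisj]
      calc (Sf ∪ Sg).card ≤ (Finset.univ : Finset (Fin m → 𝔽)).card :=
            Finset.card_le_card (Finset.subset_univ _)
        _ = N := by rw [Finset.card_univ, hNcard]
    have hsplit : Sf.card + C x = N := by
      have h1 := Finset.card_filter_add_card_filter_not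
        (s := (Finset.univ : Finset (Fin m → 𝔽))) (p := fun h : Fin m → 𝔽 => P x h x = f x)
      simp only [Finset.card_univ, hNcard] at h1
      have h2 : (Finset.univ.filter fun h : Fin m → 𝔽 => ¬ P x h x = f x)
          = (Finset.univ.filter fun h : Fin m → 𝔽 => f x ≠ P x h x) := by
        apply Finset.filter_congr
        intro h _
        simp [eq_comm]
      rw [h2] at h1
      exact h1
    omega
  have hmain : A * N ≤ 2 * B := by
    calc A * N = ∑ _x ∈ (Finset.univ.filter fun x : Fin m → 𝔽 => f x ≠ g x), N := by
          rw [Finset.sum_const, smul_eq_mul]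
      _ ≤ ∑ x ∈ (Finset.univ.filter fun x : Fin m → 𝔽 => f x ≠ g x), 2 * C x := by
          apply Finset.sum_le_sum
          intro x hx
          exact hkey x (Finset.mem_filter.mp hx).2
      _ ≤ ∑ x : Fin m → 𝔽, 2 * C x :=
          Finset.sum_le_sum_of_subset (Finset.filter_subset _ _)
      _ = 2 * B := by rw [hB, Finset.mul_sum]
  rw [distFn, deltaP, hAcard, hBcard]
  have hNR : (0:ℝ) < (Fintype.card 𝔽 : ℝ) ^ m := by positivity
  have hmainR : (A : ℝ) * ((Fintype.card 𝔽 : ℝ) ^ m) ≤ 2 * B := by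
    have h2 : ((A * N : ℕ) : ℝ) ≤ ((2 * B : ℕ) : ℝ) := by exact_mod_cast hmain
    push_cast [hN] at h2
    linarith
  rw [div_le_iff₀ hNR]
  rw [show (2:ℝ) * ((B:ℝ) / ((Fintype.card 𝔽:ℝ) ^ m * (Fintype.card 𝔽:ℝ) ^ m)) * (Fintype.card 𝔽:ℝ) ^ m
      = 2 * B / ((Fintype.card 𝔽:ℝ) ^ m) by field_simp]
  rw [le_div_iff₀ hNR]
  linarith [hmainR]
end

section
/- Let 𝔽 be a finite field and d, m, t positive integers with |𝔽| > max(3d, 9216). Let f : 𝔽^m → 𝔽^t be a function and let P be a degree-d line assignment that is optimal for f. If there exists a degree-d polynomial tuple f̃ with Δ(f, f̃) ≤ 1/12, then every majority function g for (f, P) equals f̃. -/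
open Polynomial Finset

-- degree bound for aeval with degree ≤ 1 substitutions
lemma natDegree_aeval_le_total {𝔽 : Type} [CommRing 𝔽] {m : ℕ}
    (p : MvPolynomial (Fin m) 𝔽) (φ : Fin m → Polynomial 𝔽)
    (hφ : ∀ i, (φ i).natDegree ≤ 1) :
    (MvPolynomial.aeval φ p).natDegree ≤ p.totalDegree := by
  conv_lhs => rw [p.as_sum]
  rw [map_sum]
  refine Polynomial.natDegree_sum_le_of_forall_le _ _ (fun s hs => ?_)
  rw [MvPolynomial.aeval_monomial]
  refine (Polynomial.natDegree_mul_le).trans ?_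
  have h1 : (algebraMap 𝔽 (Polynomial 𝔽) (MvPolynomial.coeff s p)).natDegree = 0 := by
    simp [Polynomial.natDegree_C]
  rw [h1, zero_add]
  refine (Polynomial.natDegree_prod_le _ _).trans ?_
  refine le_trans ?_ (MvPolynomial.le_totalDegree hs)
  refine Finset.sum_le_sum (fun i _ => ?_)
  calc ((φ i) ^ (s i)).natDegree ≤ (s i) * (φ i).natDegree := Polynomial.natDegree_pow_le
    _ ≤ (s i) * 1 := Nat.mul_le_mul_left _ (hφ i)
    _ = s i := Nat.mul_one _

lemma eval_aeval_line {𝔽 : Type} [CommRing 𝔽] {m : ℕ}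
    (p : MvPolynomial (Fin m) 𝔽) (φ : Fin m → Polynomial 𝔽) (lam : 𝔽) :
    Polynomial.eval lam (MvPolynomial.aeval φ p)
      = MvPolynomial.eval (fun i => Polynomial.eval lam (φ i)) p := by
  rw [MvPolynomial.aeval_def]
  rw [show Polynomial.eval lam (MvPolynomial.eval₂ (algebraMap 𝔽 (Polynomial 𝔽)) φ p)
      = (Polynomial.evalRingHom lam) (MvPolynomial.eval₂ (algebraMap 𝔽 (Polynomial 𝔽)) φ p) from rfl,
    MvPolynomial.eval₂_comp_left (Polynomial.evalRingHom lam)]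
  rw [MvPolynomial.eval]
  congr 1
  ext a
  simp

lemma isDegLine_of_polyTuple {𝔽 : Type} [Field 𝔽] {d m t : ℕ}
    (x h : Fin m → 𝔽) (f : (Fin m → 𝔽) → Fin t → 𝔽)
    (hf : IsPolyTuple d m t f) : IsDegLine d x h f := by
  choose p hdeg heval using hf
  refine ⟨fun j => MvPolynomial.aeval
      (fun i => Polynomial.C (x i) + Polynomial.C (h i) * Polynomial.X) (p j),
    fun j => ?_, fun lam => ?_⟩
  · refine (natDegree_aeval_le_total _ _ ?_).trans (hdeg j)
    intro i
    refine (Polynomial.natDegree_add_le _ _).trans ?_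
    simp [Polynomial.natDegree_C]
    exact (Polynomial.natDegree_mul_le).trans (by simp)
  · funext j
    rw [eval_aeval_line, heval]
    have hxy : (fun i => Polynomial.eval lam (Polynomial.C (x i) + Polynomial.C (h i) * Polynomial.X)) = x + lam • h := by
      funext i
      simp only [Polynomial.eval_add, Polynomial.eval_mul, Polynomial.eval_C,
        Polynomial.eval_X, Pi.add_apply, Pi.smul_apply, smul_eq_mul]
      ring
    rw [hxy]

lemma natCard_eq_filter {α : Type} [Fintype α] (p : α → Prop) [DecidablePred p] :
    Nat.card {a // p a} = (Finset.univ.filter p).card := by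
  rw [Nat.card_eq_fintype_card, Fintype.card_subtype]

lemma card_filter_line {𝔽 : Type} [Field 𝔽] [Fintype 𝔽] {m : ℕ} (x : Fin m → 𝔽)
    {lam : 𝔽} (hlam : lam ≠ 0) (p : (Fin m → 𝔽) → Prop) [DecidablePred p] :
    (Finset.univ.filter fun h => p (x + lam • h)).card
      = (Finset.univ.filter p).card := by
  apply Finset.card_bij (fun h _ => x + lam • h)
  · intro a ha
    simp only [Finset.mem_filter, Finset.mem_univ, true_and] at ha ⊢
    exact ha
  · intro a ha b hb hab
    exact smul_right_injective _ hlam (add_left_cancel hab)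
  · intro y hy
    simp only [Finset.mem_filter, Finset.mem_univ, true_and] at hy
    refine ⟨lam⁻¹ • (y - x), ?_, ?_⟩
    · simp only [Finset.mem_filter, Finset.mem_univ, true_and]
      rw [smul_smul, mul_inv_cancel₀ hlam, one_smul, add_sub_cancel]
      exact hy
    · rw [smul_smul, mul_inv_cancel₀ hlam, one_smul, add_sub_cancel]

set_option maxHeartbeats 2000000 in
/-- if `P` is a degree-`d` line assignment optimal for `f` and
`f` is `1/12`-close to a degree-`d` polynomial tuple `f̃`, then every majority
function for `(f, P)` equals `f̃`. -/
theorem stmt_15 {𝔽 : Type} [Field 𝔽] [Fintype 𝔽] (d m t : ℕ)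
    (hd : 0 < d) (hm : 0 < m) (ht : 0 < t)
    (hF : max (3 * d) 9216 < Fintype.card 𝔽)
    (f : (Fin m → 𝔽) → Fin t → 𝔽)
    (P : (Fin m → 𝔽) → (Fin m → 𝔽) → (Fin m → 𝔽) → Fin t → 𝔽)
    (hP : IsLineAssignment d P) (hopt : IsOptimal d P f)
    (ftilde : (Fin m → 𝔽) → Fin t → 𝔽)
    (hft : IsPolyTuple d m t ftilde) (hclose : distFn f ftilde ≤ 1 / 12) :
    ∀ g : (Fin m → 𝔽) → Fin t → 𝔽, IsMajority P g → g = ftilde := by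
  classical
  intro g hg
  funext x
  by_contra hne
  set q := Fintype.card 𝔽 with hq
  have hq3d : 3 * d < q := lt_of_le_of_lt (le_max_left _ _) hF
  have hq9 : 9216 < q := lt_of_le_of_lt (le_max_right _ _) hF
  have hq0 : 0 < q := by omega
  set Qc := q ^ m with hQc
  have hQ0 : 0 < Qc := pow_pos hq0 m
  set D := (Finset.univ.filter fun y : Fin m → 𝔽 => f y ≠ ftilde y).card with hD
  -- closeness in natural numbers
  have h12D : 12 * D ≤ Qc := by
    have hcd : distFn f ftilde = (D : ℝ) / (Qc : ℝ) := by
      rw [distFn, natCard_eq_filter]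
      rw [hD, hQc, hq]
      push_cast
      ring
    rw [hcd, div_le_div_iff₀ (by positivity) (by norm_num)] at hclose
    have : (12 * D : ℝ) ≤ (Qc : ℝ) := by linarith
    exact_mod_cast this
  -- number of disagreements on the line through x with direction h
  set N : (Fin m → 𝔽) → ℕ := fun h =>
    (Finset.univ.filter fun lam : 𝔽 =>
      f (x + lam • h) ≠ ftilde (x + lam • h)).card with hN
  -- sum bound
  have hsum : ∑ h : Fin m → 𝔽, N h ≤ Qc + (q - 1) * D := by
    have hswap : ∑ h : Fin m → 𝔽, N h = ∑ lam : 𝔽,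
        (Finset.univ.filter fun h : Fin m → 𝔽 =>
          f (x + lam • h) ≠ ftilde (x + lam • h)).card := by
      simp only [hN, Finset.card_filter]
      exact Finset.sum_comm
    rw [hswap]
    rw [Finset.sum_eq_sum_sdiff_singleton_add (Finset.mem_univ (0 : 𝔽))]
    have h1 : ∀ lam ∈ Finset.univ \ {(0 : 𝔽)},
        (Finset.univ.filter fun h : Fin m → 𝔽 =>
          f (x + lam • h) ≠ ftilde (x + lam • h)).card = D := by
      intro lam hlam
      simp only [Finset.mem_sdiff, Finset.mem_singleton] at hlam
      exact card_filter_line x hlam.2 (fun y => f y ≠ ftilde y)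
    rw [Finset.sum_congr rfl h1, Finset.sum_const, smul_eq_mul]
    have hcard : (Finset.univ \ {(0 : 𝔽)}).card = q - 1 := by
      rw [Finset.card_sdiff_of_subset (by simp), Finset.card_singleton, Finset.card_univ]
    rw [hcard]
    have h2 : (Finset.univ.filter fun h : Fin m → 𝔽 =>
        f (x + (0 : 𝔽) • h) ≠ ftilde (x + (0 : 𝔽) • h)).card ≤ Qc := by
      refine le_trans (Finset.card_filter_le _ _) ?_
      simp [Qc, hq]
    omega
  -- bad directions
  set B := (Finset.univ.filter fun h : Fin m → 𝔽 => q ≤ 2 * N h + d).card with hB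
  have hBb : B * (q - d) ≤ 2 * ∑ h : Fin m → 𝔽, N h := by
    calc B * (q - d)
        = ∑ _h ∈ (Finset.univ.filter fun h : Fin m → 𝔽 => q ≤ 2 * N h + d), (q - d) := by
          rw [Finset.sum_const, smul_eq_mul]
      _ ≤ ∑ h ∈ (Finset.univ.filter fun h : Fin m → 𝔽 => q ≤ 2 * N h + d), 2 * N h := by
          refine Finset.sum_le_sum fun h hh => ?_
          simp only [Finset.mem_filter] at hh
          omega
      _ ≤ ∑ h : Fin m → 𝔽, 2 * N h :=
          Finset.sum_le_sum_of_subset (Finset.filter_subset _ _)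
      _ = 2 * ∑ h : Fin m → 𝔽, N h := by rw [Finset.mul_sum]
  have h2B : 2 * B < Qc := by
    by_contra hcon
    push_neg at hcon
    have hdq : d ≤ q := by omega
    have hqd0 : (0 : ℤ) ≤ (q : ℤ) - d := by
      have := hdq; push_cast; omega
    have hconz : (Qc : ℤ) ≤ 2 * B := by exact_mod_cast hcon
    have hBbz : (B : ℤ) * ((q : ℤ) - d) ≤ 2 * (∑ h : Fin m → 𝔽, N h : ℕ) := by
      have := hBb
      have hc : ((B * (q - d) : ℕ) : ℤ) ≤ ((2 * ∑ h : Fin m → 𝔽, N h : ℕ) : ℤ) := by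
        exact_mod_cast this
      push_cast [Nat.cast_sub hdq] at hc
      push_cast
      linarith
    have hsumz : ((∑ h : Fin m → 𝔽, N h : ℕ) : ℤ) ≤ (Qc : ℤ) + ((q : ℤ) - 1) * D := by
      have hc : ((∑ h : Fin m → 𝔽, N h : ℕ) : ℤ) ≤ ((Qc + (q - 1) * D : ℕ) : ℤ) := by
        exact_mod_cast hsum
      push_cast [Nat.cast_sub (show 1 ≤ q by omega)] at hc
      push_cast
      linarith
    have h12Dz : 12 * (D : ℤ) ≤ (Qc : ℤ) := by exact_mod_cast h12D
    have hq3dz : 3 * (d : ℤ) < (q : ℤ) := by exact_mod_cast hq3d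
    have hq9z : (9216 : ℤ) < (q : ℤ) := by exact_mod_cast hq9
    have hQ0z : (0 : ℤ) < (Qc : ℤ) := by exact_mod_cast hQ0
    have hD0 : (0 : ℤ) ≤ (D : ℤ) := by positivity
    have e1 : (Qc : ℤ) * ((q : ℤ) - d) ≤ (2 * B) * ((q : ℤ) - d) :=
      mul_le_mul_of_nonneg_right hconz hqd0
    have p1 : (Qc : ℤ) * ((q : ℤ) - d) ≤ 4 * Qc + 4 * (((q : ℤ) - 1) * D) := by linarith
    have p2 : 4 * ((q : ℤ) - 1) * (12 * D) ≤ 4 * ((q : ℤ) - 1) * Qc := by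
      apply mul_le_mul_of_nonneg_left h12Dz
      linarith
    have p3 : (Qc : ℤ) * (2 * q + 1) ≤ (Qc : ℤ) * (3 * ((q : ℤ) - d)) := by
      apply mul_le_mul_of_nonneg_left _ (le_of_lt hQ0z)
      linarith
    have p4 : 9217 * (Qc : ℤ) ≤ (q : ℤ) * Qc := by
      apply mul_le_mul_of_nonneg_right _ (le_of_lt hQ0z)
      linarith
    nlinarith [p1, p2, p3, p4, hQ0z]
  -- good directions agree with ftilde at x
  have hgood : ∀ h : Fin m → 𝔽, 2 * N h + d < q → P x h x = ftilde x := by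
    intro h hlt
    have hdl := isDegLine_of_polyTuple x h ftilde hft
    obtain ⟨pP, hpPdeg, hpPev⟩ := hP.1 x h
    have hdl2 := hdl
    obtain ⟨pf, hpfdeg, hpfev⟩ := hdl2
    have hoptN : (Finset.univ.filter fun lam : 𝔽 =>
        P x h (x + lam • h) ≠ f (x + lam • h)).card ≤ N h := by
      have hthis := hopt x h ftilde hdl
      rw [natCard_eq_filter, natCard_eq_filter] at hthis
      have hflip : (Finset.univ.filter fun lam : 𝔽 =>
          ftilde (x + lam • h) ≠ f (x + lam • h))
          = (Finset.univ.filter fun lam : 𝔽 =>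
            f (x + lam • h) ≠ ftilde (x + lam • h)) := by
        ext lam
        simp [ne_comm]
      rw [hflip] at hthis
      exact hthis
    have hPft : (Finset.univ.filter fun lam : 𝔽 =>
        P x h (x + lam • h) ≠ ftilde (x + lam • h)).card ≤ 2 * N h := by
      have hsub : (Finset.univ.filter fun lam : 𝔽 =>
          P x h (x + lam • h) ≠ ftilde (x + lam • h)) ⊆
          (Finset.univ.filter fun lam : 𝔽 =>
            P x h (x + lam • h) ≠ f (x + lam • h)) ∪
          (Finset.univ.filter fun lam : 𝔽 =>
            f (x + lam • h) ≠ ftilde (x + lam • h)) := by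
        intro lam hlam
        simp only [Finset.mem_filter, Finset.mem_univ, true_and,
          Finset.mem_union] at hlam ⊢
        by_contra hcc
        push_neg at hcc
        exact hlam (hcc.1.trans hcc.2)
      refine le_trans (Finset.card_le_card hsub)
        (le_trans (Finset.card_union_le _ _) ?_)
      have hBN : (Finset.univ.filter fun lam : 𝔽 =>
          f (x + lam • h) ≠ ftilde (x + lam • h)).card = N h := rfl
      omega
    by_contra hPx
    have hx0 : x = x + (0 : 𝔽) • h := by simp
    have hj : ∃ j : Fin t, Polynomial.eval (0 : 𝔽) (pP j) ≠ Polynomial.eval (0 : 𝔽) (pf j) := by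
      by_contra hcc
      push_neg at hcc
      apply hPx
      have e1 := hpPev 0
      have e2 := hpfev 0
      rw [show x + (0 : 𝔽) • h = x by simp] at e1 e2
      rw [e1, e2]
      funext j
      exact hcc j
    obtain ⟨j, hj⟩ := hj
    set u := pP j - pf j with hu
    have hu0 : u ≠ 0 := by
      intro hc
      apply hj
      have : pP j = pf j := by
        have := sub_eq_zero.mp hc
        exact this
      rw [this]
    have hudeg : u.natDegree ≤ d := by
      refine (Polynomial.natDegree_sub_le _ _).trans ?_
      exact max_le (hpPdeg j) (hpfdeg j)
    -- roots bound
    have hroots : (Finset.univ.filter fun lam : 𝔽 =>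
        Polynomial.eval lam (pP j) = Polynomial.eval lam (pf j)).card ≤ d := by
      have hsub : (Finset.univ.filter fun lam : 𝔽 =>
          Polynomial.eval lam (pP j) = Polynomial.eval lam (pf j)) ⊆ u.roots.toFinset := by
        intro lam hlam
        simp only [Finset.mem_filter, Finset.mem_univ, true_and] at hlam
        rw [Multiset.mem_toFinset, Polynomial.mem_roots hu0]
        simp only [hu, Polynomial.IsRoot, Polynomial.eval_sub, hlam, sub_self]
      refine (Finset.card_le_card hsub).trans ?_
      refine (u.roots.toFinset_card_le).trans ?_
      exact (Multiset.card_le_card (le_refl _)).trans ((u.card_roots').trans hudeg)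
    have hneq : q - d ≤ (Finset.univ.filter fun lam : 𝔽 =>
        Polynomial.eval lam (pP j) ≠ Polynomial.eval lam (pf j)).card := by
      have := Finset.card_filter_add_card_filter_not
        (s := (Finset.univ : Finset 𝔽))
        (p := fun lam : 𝔽 => Polynomial.eval lam (pP j) = Polynomial.eval lam (pf j))
      rw [Finset.card_univ] at this
      have hzw : (Finset.univ.filter fun a : 𝔽 =>
          ¬ (Polynomial.eval a (pP j) = Polynomial.eval a (pf j)))
          = (Finset.univ.filter fun lam : 𝔽 =>
            Polynomial.eval lam (pP j) ≠ Polynomial.eval lam (pf j)) := by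
        ext a
        simp
      rw [hzw] at this
      omega
    have hsub2 : (Finset.univ.filter fun lam : 𝔽 =>
        Polynomial.eval lam (pP j) ≠ Polynomial.eval lam (pf j)) ⊆
        (Finset.univ.filter fun lam : 𝔽 =>
          P x h (x + lam • h) ≠ ftilde (x + lam • h)) := by
      intro lam hlam
      simp only [Finset.mem_filter, Finset.mem_univ, true_and] at hlam ⊢
      intro hc
      apply hlam
      have h1 := congrFun (hpPev lam) j
      have h2 := congrFun (hpfev lam) j
      rw [← h1, ← h2, hc]
    have := (Finset.card_le_card hsub2)
    omega
  -- counting at x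
  have hA : Qc - B ≤ (Finset.univ.filter fun h : Fin m → 𝔽 => P x h x = ftilde x).card := by
    have hsub : (Finset.univ.filter fun h : Fin m → 𝔽 => ¬ (q ≤ 2 * N h + d)) ⊆
        (Finset.univ.filter fun h : Fin m → 𝔽 => P x h x = ftilde x) := by
      intro h hh
      simp only [Finset.mem_filter, Finset.mem_univ, true_and] at hh ⊢
      exact hgood h (by omega)
    refine le_trans (le_of_eq ?_) (Finset.card_le_card hsub)
    rw [Finset.filter_not, Finset.card_sdiff_of_subset (Finset.filter_subset _ _)]
    rw [Finset.card_univ]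
    congr 1
    simp [Qc, hq]
  have hmaj := hg x (ftilde x)
  rw [natCard_eq_filter, natCard_eq_filter] at hmaj
  have hdisj : (Finset.univ.filter fun h : Fin m → 𝔽 => P x h x = g x).card ≤
      Qc - (Finset.univ.filter fun h : Fin m → 𝔽 => P x h x = ftilde x).card := by
    have hsub : (Finset.univ.filter fun h : Fin m → 𝔽 => P x h x = g x) ⊆
        Finset.univ \ (Finset.univ.filter fun h : Fin m → 𝔽 => P x h x = ftilde x) := by
      intro h hh
      simp only [Finset.mem_filter, Finset.mem_univ, true_and, Finset.mem_sdiff] at hh ⊢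
      intro hc
      exact hne (hh ▸ hc ▸ rfl)
    refine (Finset.card_le_card hsub).trans ?_
    rw [Finset.card_sdiff_of_subset (Finset.filter_subset _ _), Finset.card_univ]
    have : Fintype.card (Fin m → 𝔽) = Qc := by simp [Qc, hq]
    omega
  have hAQ : (Finset.univ.filter fun h : Fin m → 𝔽 => P x h x = ftilde x).card ≤ Qc := by
    refine (Finset.card_filter_le _ _).trans ?_
    simp [Qc, hq]
  omega
end
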